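/- arXiv:1506.05344 — 3 statements merged into one kernel-verified Lean document; each statement's English description precedes it below -/
import Mathlib

section
/- As an identity of formal power series in q, (q^2;q^2)_∞ / (q;q^2)_∞ = Σ_{n=0}^∞ q^{n(n+1)/2} (Gauss's identity). -/
open PowerSeries Finset

/-- The infinite product `∏_{i=0}^∞ f i` of formal power series, defined coefficientwise. -/
noncomputable def prodInf {K : Type*} [CommRing K] (f : ℕ → PowerSeries K) : PowerSeries K :=
  PowerSeries.mk fun d => PowerSeries.coeff d (∏ i ∈ Finset.range (d + 1), f i)

/-- The theta-like series `Σ_{n=0}^∞ q^{n(n+1)/2}`: the coefficient of `q^d` is `1` if `d`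
is a triangular number, and `0` otherwise (triangular numbers are pairwise distinct). -/
noncomputable def triangularSeries : PowerSeries ℚ := open scoped Classical in
  PowerSeries.mk fun d => if ∃ n ∈ Finset.range (d + 1), n * (n + 1) / 2 = d then 1 else 0

namespace GaussAux

noncomputable section

abbrev R := PowerSeries ℚ

/-- Gaussian binomial `[m choose k]_q` as a power series (zero outside `0 ≤ k ≤ m`). -/
def gb : ℕ → ℤ → R
  | 0, k => if k = 0 then 1 else 0
  | (m+1), k => gb m k + X ^ ((m + 1 - k).toNat) * gb m (k - 1)

/-- triangular exponent for integer index -/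
def e (k : ℤ) : ℕ := (k * (k + 1) / 2).toNat

/-- triangular number -/
def T (k : ℕ) : ℕ := k * (k + 1) / 2

/-- the bilateral Gaussian sum -/
def S (n : ℕ) : R := ∑ j ∈ range (2*n + 1), gb (2*n) j * X ^ e ((j : ℤ) - n)

def Pq (n : ℕ) : R := ∏ i ∈ range n, (1 - X ^ (i+1))
def F1 (n : ℕ) : R := ∏ i ∈ range n, (1 + X ^ (i+1))
def Ee (n : ℕ) : R := ∏ i ∈ range n, (1 - X ^ (2*i+2))
def Oo (n : ℕ) : R := ∏ i ∈ range n, (1 - X ^ (2*i+1))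
def psiP (m : ℕ) : R := ∑ k ∈ range m, X ^ (T k)

lemma tri_nonneg (k : ℤ) : 0 ≤ k * (k+1) := by
  have h : 0 ≤ 4*(k*(k+1)) + 1 := by nlinarith [sq_nonneg (2*k+1)]
  omega

lemma tri_dvd (k : ℤ) : 2 * (k * (k+1) / 2) = k * (k+1) := by
  refine Int.mul_ediv_cancel' ?_
  rcases Int.even_or_odd k with ⟨c, hc⟩ | ⟨c, hc⟩
  · exact ⟨c * (k+1), by rw [hc]; ring⟩
  · exact ⟨k * (c+1), by rw [hc]; ring⟩

lemma tri_div_nonneg (k : ℤ) : 0 ≤ k * (k+1) / 2 :=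
  Int.ediv_nonneg (tri_nonneg k) (by norm_num)

lemma e_succZ (k : ℤ) : (k+1) * (k+1+1) / 2 = k * (k+1) / 2 + (k+1) := by
  have h : 2 * ((k+1)*(k+1+1)/2) = 2 * (k*(k+1)/2 + (k+1)) := by
    rw [tri_dvd (k+1), mul_add 2, tri_dvd k]; ring
  exact mul_left_cancel₀ two_ne_zero h

lemma exp1 (n : ℕ) (k : ℤ) (hk : -(n:ℤ)-1 ≤ k) :
    ((n:ℤ)+1+k).toNat + e k = e (k+1) + n := by
  have h1 := e_succZ k
  have h4 := tri_div_nonneg k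
  have h5 := tri_div_nonneg (k+1)
  unfold e
  omega

lemma exp2 (n : ℕ) (k : ℤ) (hk : k ≤ (n:ℤ)+1) :
    ((n:ℤ)+1-k).toNat + e k = e (k-1) + (n+1) := by
  have h1 := e_succZ (k-1)
  have h4 := tri_div_nonneg k
  have h5 := tri_div_nonneg (k-1)
  unfold e
  rw [show k-1+1 = k from by ring] at h1 h5 ⊢
  omega

lemma e_coe (i : ℕ) : e (i : ℤ) = T i := by
  have h1 := tri_dvd (i : ℤ)
  have h2 : ((i:ℤ) * ((i:ℤ)+1)) = ((i * (i+1) : ℕ) : ℤ) := by push_cast; ring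
  have h3 : 2 * (i * (i+1) / 2) = i * (i+1) := by
    have := Nat.even_mul_succ_self i
    omega
  unfold e T
  rw [h2] at h1 ⊢
  omega

lemma e_neg (i : ℕ) : e (-1 - (i:ℤ)) = T i := by
  have h1 := tri_dvd (-1 - (i:ℤ))
  have h2 : (-1 - (i:ℤ)) * (-1 - (i:ℤ) + 1) = ((i * (i+1) : ℕ) : ℤ) := by push_cast; ring
  have h3 : 2 * (i * (i+1) / 2) = i * (i+1) := by
    have := Nat.even_mul_succ_self i
    omega
  unfold e T
  rw [h2] at h1 ⊢
  omega

lemma T_succ (k : ℕ) : T (k+1) = T k + (k+1) := by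
  unfold T
  have : (k+1)*(k+1+1) = k*(k+1) + 2*(k+1) := by ring
  omega

lemma T_ge (k : ℕ) : k ≤ T k := by
  induction k with
  | zero => simp [T]
  | succ n ih => rw [T_succ]; omega

lemma T_injective : Function.Injective T := by
  have hmono : StrictMono T := strictMono_nat_of_lt_succ (fun n => by rw [T_succ]; omega)
  exact hmono.injective

lemma gb_neg (m : ℕ) : ∀ k : ℤ, k < 0 → gb m k = 0 := by
  induction m with
  | zero => intro k hk; simp [gb, hk.ne]
  | succ m ih =>
    intro k hk
    simp [gb, ih k hk, ih (k-1) (by omega)]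

lemma gb_gt (m : ℕ) : ∀ k : ℤ, (m : ℤ) < k → gb m k = 0 := by
  induction m with
  | zero => intro k hk; simp [gb]; omega
  | succ m ih =>
    intro k hk
    push_cast at hk
    simp [gb, ih k (by omega), ih (k-1) (by omega)]

lemma gb_zero (m : ℕ) : gb m 0 = 1 := by
  induction m with
  | zero => simp [gb]
  | succ m ih => simp [gb, ih, gb_neg m (-1) (by omega)]

/-- the "ratio" form of the q-Pascal rule -/
lemma gbC (m : ℕ) : ∀ k : ℤ, (1 - X ^ k.toNat) * gb m k = (1 - X ^ ((m:ℤ)+1-k).toNat) * gb m (k-1) := by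
  induction m with
  | zero =>
    intro k
    rcases eq_or_ne k 0 with rfl | h0
    · simp [gb_neg 0 (-1) (by omega)]
    rcases eq_or_ne k 1 with rfl | h1
    · have h : gb 0 (1:ℤ) = 0 := by simp [gb]
      rw [h]
      simp [gb]
    · simp [gb, h0, show k - 1 ≠ 0 from by omega]
  | succ m ih =>
    intro k
    rcases le_or_gt k 0 with hk0 | hk0
    · have : k.toNat = 0 := by omega
      rw [this, gb_neg (m+1) (k-1) (by omega)]
      simp
    rcases le_or_gt ((m:ℤ)+2) k with hkm | hkm
    · rw [gb_gt (m+1) k (by push_cast; omega)]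
      have h2 : ((m:ℤ)+1+1-k).toNat = 0 := by omega
      rw [show ((m+1:ℕ):ℤ)+1-k = (m:ℤ)+1+1-k from by push_cast; ring, h2]
      simp
    -- main case 1 ≤ k ≤ m+1
    have hk1 : 1 ≤ k := hk0
    have hkm1 : k ≤ (m:ℤ)+1 := by omega
    show (1 - X ^ k.toNat) * (gb m k + X ^ (((m:ℤ)+1-k).toNat) * gb m (k-1))
       = (1 - X ^ ((m:ℤ)+1+1-k).toNat) * (gb m (k-1) + X ^ (((m:ℤ)+1-(k-1)).toNat) * gb m (k-1-1))
    have e1 : ((m:ℤ)+1-(k-1)).toNat = ((m:ℤ)+2-k).toNat := by omega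
    have e2 : ((m:ℤ)+1+1-k).toNat = ((m:ℤ)+2-k).toNat := by omega
    rw [e1, e2]
    have L1 : (1 - X ^ k.toNat) * gb m k = (1 - X ^ ((m:ℤ)+1-k).toNat) * gb m (k-1) := ih k
    have L2 : (1 - X ^ (k-1).toNat) * gb m (k-1) = (1 - X ^ ((m:ℤ)+1-(k-1)).toNat) * gb m (k-1-1) := ih (k-1)
    rw [e1] at L2
    -- LHS = (1-X^k) gb m k + X^{m+1-k} (1-X^k) gb m (k-1)
    --     = (1-X^{m+1-k}) gb m (k-1) + X^{m+1-k}(1-X^k) gb m (k-1) = (1 - X^{m+1}) gb m (k-1)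
    have hXk : X ^ (((m:ℤ)+1-k).toNat) * X ^ k.toNat = (X:R) ^ (m+1) := by
      rw [← pow_add]; congr 1; omega
    have hXk2 : X ^ (((m:ℤ)+2-k).toNat) * X ^ (k-1).toNat = (X:R) ^ (m+1) := by
      rw [← pow_add]; congr 1; omega
    calc (1 - X ^ k.toNat) * (gb m k + X ^ (((m:ℤ)+1-k).toNat) * gb m (k-1))
        = (1 - X ^ k.toNat) * gb m k + X ^ (((m:ℤ)+1-k).toNat) * ((1 - X ^ k.toNat) * gb m (k-1)) := by ring
      _ = (1 - X ^ ((m:ℤ)+1-k).toNat) * gb m (k-1) + X ^ (((m:ℤ)+1-k).toNat) * ((1 - X ^ k.toNat) * gb m (k-1)) := by rw [L1]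
      _ = (1 - X ^ (((m:ℤ)+1-k).toNat) * X ^ k.toNat) * gb m (k-1) := by ring
      _ = (1 - (X:R) ^ (m+1)) * gb m (k-1) := by rw [hXk]
      _ = (1 - X ^ (((m:ℤ)+2-k).toNat) * X ^ (k-1).toNat) * gb m (k-1) := by rw [hXk2]
      _ = (1 - X ^ ((m:ℤ)+2-k).toNat) * gb m (k-1) + X ^ (((m:ℤ)+2-k).toNat) * ((1 - X ^ (k-1).toNat) * gb m (k-1)) := by ring
      _ = (1 - X ^ ((m:ℤ)+2-k).toNat) * gb m (k-1) + X ^ (((m:ℤ)+2-k).toNat) * ((1 - X ^ ((m:ℤ)+2-k).toNat) * gb m (k-1-1)) := by rw [L2]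
      _ = (1 - X ^ ((m:ℤ)+2-k).toNat) * (gb m (k-1) + X ^ (((m:ℤ)+2-k).toNat) * gb m (k-1-1)) := by ring

/-- the second q-Pascal rule -/
lemma gbB (m : ℕ) (k : ℤ) : gb (m+1) k = X ^ k.toNat * gb m k + gb m (k-1) := by
  show gb m k + X ^ (((m:ℤ)+1-k).toNat) * gb m (k-1) = _
  have := gbC m k
  -- (1 - X^k) gb m k = (1 - X^{m+1-k}) gb m (k-1)
  -- gb m k + X^{m+1-k} gb m (k-1) = X^k gb m k + gb m (k-1)
  linear_combination this

lemma gb_diag (m : ℕ) : gb m (m : ℤ) = 1 := by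
  induction m with
  | zero => simp [gb]
  | succ m ih =>
    rw [show ((m+1 : ℕ) : ℤ) = (m:ℤ)+1 from by push_cast; ring, gbB]
    rw [gb_gt m ((m:ℤ)+1) (by omega), show (m:ℤ)+1-1 = (m:ℤ) from by ring, ih]
    ring
lemma gbD (m : ℕ) (j : ℤ) : gb (m+2) j
    = X ^ j.toNat * gb m j + (1 + X^(m+1)) * gb m (j-1) + X ^ (((m:ℤ)+2-j).toNat) * gb m (j-2) := by
  have hdef : gb (m+2) j = gb (m+1) j + X ^ ((((m+1):ℕ) + 1 - j : ℤ).toNat) * gb (m+1) (j - 1) := by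
    show gb (m+1) j + X ^ ((((m+1):ℕ) + 1 - j : ℤ).toNat) * gb (m+1) (j - 1) = _
    rfl
  rcases le_or_gt j 0 with hj0 | hj0
  · rcases eq_or_lt_of_le hj0 with rfl | hlt
    · rw [hdef, gb_neg (m+1) (0-1) (by omega), gb_neg m (0-1) (by omega), gb_neg m (0-2) (by omega)]
      rw [gb_zero, gb_zero]
      simp
    · rw [hdef, gb_neg (m+1) (j-1) (by omega), gb_neg m (j-1) (by omega), gb_neg m (j-2) (by omega),
        gb_neg (m+1) j (by omega), gb_neg m j (by omega)]
      simp
  rcases le_or_gt j ((m:ℤ)+1) with hjm | hjm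
  · -- main case 1 ≤ j ≤ m+1
    rw [hdef, gbB m j, gbB m (j-1)]
    have hcast : ((((m+1):ℕ) + 1 - j) : ℤ).toNat = ((m:ℤ)+2-j).toNat := by push_cast; omega
    rw [hcast]
    have h1 : X ^ (((m:ℤ)+2-j).toNat) * X ^ ((j-1).toNat) = (X:R)^(m+1) := by
      rw [← pow_add]; congr 1; omega
    rw [show j - 1 - 1 = j - 2 from by ring]
    linear_combination (gb m (j-1)) * h1
  · -- j ≥ m+2
    rcases eq_or_lt_of_le (show (m:ℤ)+2 ≤ j from hjm) with heq | hgt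
    · rw [hdef, ← heq]
      rw [gb_gt (m+1) ((m:ℤ)+2) (by push_cast; omega), gb_gt m ((m:ℤ)+2) (by omega),
        gb_gt m ((m:ℤ)+2-1) (by omega)]
      have h0 : ((((m+1):ℕ) + 1 - ((m:ℤ)+2)) : ℤ).toNat = 0 := by push_cast; omega
      have h0' : (((m:ℤ)+2-((m:ℤ)+2)) : ℤ).toNat = 0 := by omega
      rw [h0, h0']
      rw [show (m:ℤ)+2-1 = (m:ℤ)+1 from by ring, show (m:ℤ)+2-2 = (m:ℤ) from by ring]
      rw [gbB m ((m:ℤ)+1), gb_gt m ((m:ℤ)+1) (by omega), gb_diag,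
        show (m:ℤ)+1-1 = (m:ℤ) from by ring, gb_diag]
      simp
    · rw [hdef, gb_gt (m+1) j (by push_cast; omega), gb_gt (m+1) (j-1) (by push_cast; omega),
        gb_gt m j (by omega), gb_gt m (j-1) (by omega), gb_gt m (j-2) (by omega)]
      simp

lemma S_zero : S 0 = 1 := by
  unfold S
  rw [show 2*0+1 = 1 from rfl, sum_range_one]
  norm_num [gb, e]

lemma S_succ (n : ℕ) : S (n+1) = (1 + X^n) * (1 + X^(n+1)) * S n := by
  have hc : ((n+1:ℕ):ℤ) = (n:ℤ)+1 := by push_cast; ring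
  have hSn : ∀ N, 2*n+1 ≤ N → (∑ j ∈ range N, gb (2*n) j * X ^ e ((j:ℤ) - (n:ℤ))) = S n := by
    intro N hN
    unfold S
    rw [← sum_subset (range_subset_range.2 hN)]
    intro x hx hx2
    rw [gb_gt (2*n) (x:ℤ) (by simp only [mem_range] at hx2; push_cast; omega)]
    ring
  have hsplit : S (n+1)
      = (∑ j ∈ range (2*n+3), X ^ ((j:ℤ)).toNat * gb (2*n) j * X ^ e ((j:ℤ) - ((n:ℤ)+1)))
      + (∑ j ∈ range (2*n+3), (1 + X^(2*n+1)) * (gb (2*n) ((j:ℤ)-1) * X ^ e ((j:ℤ) - ((n:ℤ)+1))))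
      + (∑ j ∈ range (2*n+3), X ^ ((2*(n:ℤ)+2-(j:ℤ)).toNat) * gb (2*n) ((j:ℤ)-2) * X ^ e ((j:ℤ) - ((n:ℤ)+1))) := by
    unfold S
    rw [show 2*(n+1) = (2*n)+2 from by ring, hc, ← sum_add_distrib, ← sum_add_distrib]
    refine sum_congr rfl (fun j hj => ?_)
    rw [gbD (2*n) (j:ℤ)]
    have hcast : (((2*n:ℕ):ℤ)+2-(j:ℤ)).toNat = ((2*(n:ℤ)+2-(j:ℤ))).toNat := by push_cast; omega
    rw [hcast]
    ring
  have hA : (∑ j ∈ range (2*n+3), X ^ ((j:ℤ)).toNat * gb (2*n) j * X ^ e ((j:ℤ) - ((n:ℤ)+1)))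
      = X^n * S n := by
    have hterm : ∀ j ∈ range (2*n+3), X ^ ((j:ℤ)).toNat * gb (2*n) j * X ^ e ((j:ℤ) - ((n:ℤ)+1))
        = X^n * (gb (2*n) j * X ^ e ((j:ℤ) - (n:ℤ))) := by
      intro j hj
      have hk := exp1 n ((j:ℤ) - ((n:ℤ)+1)) (by omega)
      rw [show (n:ℤ)+1+((j:ℤ) - ((n:ℤ)+1)) = (j:ℤ) from by ring,
          show (j:ℤ) - ((n:ℤ)+1) + 1 = (j:ℤ) - (n:ℤ) from by ring] at hk
      calc X ^ ((j:ℤ)).toNat * gb (2*n) j * X ^ e ((j:ℤ) - ((n:ℤ)+1))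
          = gb (2*n) j * X ^ (((j:ℤ)).toNat + e ((j:ℤ) - ((n:ℤ)+1))) := by rw [pow_add]; ring
        _ = gb (2*n) j * X ^ (e ((j:ℤ) - (n:ℤ)) + n) := by rw [hk]
        _ = X^n * (gb (2*n) j * X ^ e ((j:ℤ) - (n:ℤ))) := by rw [pow_add]; ring
    rw [sum_congr rfl hterm, ← mul_sum, hSn (2*n+3) (by omega)]
  have hB : (∑ j ∈ range (2*n+3), (1 + X^(2*n+1)) * (gb (2*n) ((j:ℤ)-1) * X ^ e ((j:ℤ) - ((n:ℤ)+1))))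
      = (1 + X^(2*n+1)) * S n := by
    rw [← mul_sum]
    congr 1
    rw [show 2*n+3 = (2*n+2)+1 from rfl, sum_range_succ']
    have h0 : gb (2*n) (((0:ℕ):ℤ)-1) * X ^ e (((0:ℕ):ℤ) - ((n:ℤ)+1)) = 0 := by
      rw [gb_neg (2*n) _ (by omega)]; ring
    rw [h0, add_zero]
    rw [← hSn (2*n+2) (by omega)]
    refine sum_congr rfl (fun j hj => ?_)
    have c1 : ((j+1:ℕ):ℤ)-1 = (j:ℤ) := by push_cast; ring
    have c2 : ((j+1:ℕ):ℤ) - ((n:ℤ)+1) = (j:ℤ) - (n:ℤ) := by push_cast; ring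
    rw [c1, c2]
  have hC : (∑ j ∈ range (2*n+3), X ^ ((2*(n:ℤ)+2-(j:ℤ)).toNat) * gb (2*n) ((j:ℤ)-2) * X ^ e ((j:ℤ) - ((n:ℤ)+1)))
      = X^(n+1) * S n := by
    rw [show 2*n+3 = (2*n+2)+1 from rfl, sum_range_succ']
    have h0 : X ^ ((2*(n:ℤ)+2-((0:ℕ):ℤ)).toNat) * gb (2*n) (((0:ℕ):ℤ)-2) * X ^ e (((0:ℕ):ℤ) - ((n:ℤ)+1)) = 0 := by
      rw [gb_neg (2*n) _ (by omega)]; ring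
    rw [h0, add_zero]
    rw [show 2*n+2 = (2*n+1)+1 from rfl, sum_range_succ']
    have h1 : X ^ ((2*(n:ℤ)+2-((0+1:ℕ):ℤ)).toNat) * gb (2*n) (((0+1:ℕ):ℤ)-2) * X ^ e (((0+1:ℕ):ℤ) - ((n:ℤ)+1)) = 0 := by
      rw [gb_neg (2*n) _ (by omega)]; ring
    rw [h1, add_zero]
    have hterm : ∀ j ∈ range (2*n+1),
        X ^ ((2*(n:ℤ)+2-((j+1+1:ℕ):ℤ)).toNat) * gb (2*n) (((j+1+1:ℕ):ℤ)-2) * X ^ e (((j+1+1:ℕ):ℤ) - ((n:ℤ)+1))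
        = X^(n+1) * (gb (2*n) j * X ^ e ((j:ℤ) - (n:ℤ))) := by
      intro j hj
      simp only [mem_range] at hj
      have c1 : ((j+1+1:ℕ):ℤ)-2 = (j:ℤ) := by push_cast; ring
      have c2 : ((j+1+1:ℕ):ℤ) - ((n:ℤ)+1) = (j:ℤ) - (n:ℤ) + 1 := by push_cast; ring
      have c3 : (2*(n:ℤ)+2-((j+1+1:ℕ):ℤ)) = 2*(n:ℤ) - (j:ℤ) := by push_cast; ring
      rw [c1, c2, c3]
      have hk := exp2 n ((j:ℤ) - (n:ℤ) + 1) (by omega)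
      rw [show (n:ℤ)+1-((j:ℤ) - (n:ℤ) + 1) = 2*(n:ℤ) - (j:ℤ) from by ring,
          show (j:ℤ) - (n:ℤ) + 1 - 1 = (j:ℤ) - (n:ℤ) from by ring] at hk
      calc X ^ ((2*(n:ℤ) - (j:ℤ)).toNat) * gb (2*n) j * X ^ e ((j:ℤ) - (n:ℤ) + 1)
          = gb (2*n) j * X ^ ((2*(n:ℤ) - (j:ℤ)).toNat + e ((j:ℤ) - (n:ℤ) + 1)) := by rw [pow_add]; ring
        _ = gb (2*n) j * X ^ (e ((j:ℤ) - (n:ℤ)) + (n+1)) := by rw [hk]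
        _ = X^(n+1) * (gb (2*n) j * X ^ e ((j:ℤ) - (n:ℤ))) := by rw [pow_add]; ring
    rw [sum_congr rfl hterm, ← mul_sum, hSn (2*n+1) (by omega)]
  rw [hsplit, hA, hB, hC]
  ring

lemma S_closed (n : ℕ) : S (n+1) = 2 * F1 n * F1 (n+1) := by
  induction n with
  | zero =>
    rw [S_succ 0, S_zero]
    unfold F1
    simp only [range_zero, prod_empty, range_one, prod_range_one]
    norm_num
  | succ m ih =>
    rw [S_succ (m+1), ih]
    unfold F1
    rw [prod_range_succ (fun i => (1:R) + X^(i+1)) (m+1), prod_range_succ (fun i => (1:R) + X^(i+1)) m]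
    ring
lemma prod_one_sub_dvd {D r : ℕ} (g : ℕ → ℕ) (hg : ∀ i ∈ range r, D ≤ g i) :
    (X:R)^D ∣ (∏ i ∈ range r, (1 - X ^ (g i))) - 1 := by
  induction r with
  | zero => simp
  | succ m ih =>
    rw [prod_range_succ]
    have h1 : (X:R)^D ∣ (∏ i ∈ range m, (1 - X ^ g i)) - 1 :=
      ih (fun i hi => hg i (mem_range.2 (by simp only [mem_range] at hi; omega)))
    have h2 : (X:R)^D ∣ X ^ (g m) := pow_dvd_pow X (hg m (mem_range.2 (by omega)))
    have heq : (∏ i ∈ range m, ((1:R) - X ^ g i)) * (1 - X ^ g m) - 1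
         = ((∏ i ∈ range m, ((1:R) - X ^ g i)) - 1) - (∏ i ∈ range m, ((1:R) - X ^ g i)) * X ^ g m := by ring
    rw [heq]
    exact dvd_sub h1 (Dvd.dvd.mul_left h2 _)

lemma gbV (m : ℕ) : ∀ j : ℕ, gb m (j:ℤ) * Pq j = ∏ i ∈ range j, (1 - X ^ (m - i)) := by
  induction m with
  | zero =>
    intro j
    match j with
    | 0 => simp [gb, Pq]
    | (j'+1) =>
      rw [gb_gt 0 ((j'+1 : ℕ):ℤ) (by push_cast; omega)]
      rw [Finset.prod_eq_zero (mem_range.2 (show 0 < j'+1 from by omega))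
        (by rw [Nat.sub_zero, pow_zero]; ring)]
      ring
  | succ m ih =>
    intro j
    match j with
    | 0 => simp [gb_zero, Pq]
    | (j'+1) =>
      rcases le_or_gt (j'+1) (m+1) with hj | hj
      · have hdef : gb (m+1) ((j'+1 : ℕ):ℤ) = gb m ((j'+1 : ℕ):ℤ)
            + X ^ (((m:ℤ) + 1 - ((j'+1:ℕ):ℤ)).toNat) * gb m (((j'+1:ℕ):ℤ) - 1) := rfl
        have hc1 : ((j'+1:ℕ):ℤ) - 1 = (j' : ℤ) := by push_cast; ring
        have hc2 : (((m:ℤ) + 1 - ((j'+1:ℕ):ℤ)).toNat) = m - j' := by push_cast; omega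
        rw [hdef, hc1, hc2]
        have hPq : Pq (j'+1) = Pq j' * (1 - X^(j'+1)) := by
          unfold Pq; rw [prod_range_succ]
        have hXX : (X:R) ^ (m - j') * X^(j'+1) = X^(m+1) := by
          rw [← pow_add]; congr 1; omega
        have target : (∏ i ∈ range (j'+1), ((1:R) - X ^ (m + 1 - i)))
            = (1 - X^(m+1)) * ∏ i ∈ range j', (1 - X ^ (m - i)) := by
          have hps := prod_range_succ' (f := fun i => (1:R) - X ^ (m + 1 - i)) (n := j')
          rw [hps, Nat.sub_zero, mul_comm]
          congr 1
          refine prod_congr rfl (fun i _ => ?_)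
          congr 2
          omega
        rw [target]
        calc (gb m ((j'+1 : ℕ):ℤ) + X ^ (m - j') * gb m (j':ℤ)) * Pq (j'+1)
            = gb m ((j'+1 : ℕ):ℤ) * Pq (j'+1) + X ^ (m-j') * (1 - X^(j'+1)) * (gb m (j':ℤ) * Pq j') := by
              rw [hPq]; ring
          _ = (∏ i ∈ range (j'+1), (1 - X ^ (m - i))) + X ^ (m-j') * (1 - X^(j'+1)) * ∏ i ∈ range j', (1 - X ^ (m - i)) := by
              rw [ih (j'+1), ih j']
          _ = (∏ i ∈ range j', (1 - X ^ (m - i))) * ((1 - X^(m-j')) + X ^ (m-j') * (1 - X^(j'+1))) := by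
              rw [prod_range_succ]; ring
          _ = (∏ i ∈ range j', (1 - X ^ (m - i))) * (1 - X^(m+1)) := by
              have hb : (1 - X^(m-j'):R) + X^(m-j') * (1 - X^(j'+1)) = 1 - X^(m+1) := by
                rw [← hXX]; ring
              rw [hb]
          _ = (1 - X^(m+1)) * ∏ i ∈ range j', (1 - X ^ (m - i)) := by ring
      · -- j'+1 > m+1 : both sides vanish
        rw [gb_gt (m+1) ((j'+1 : ℕ):ℤ) (by push_cast; omega)]
        rw [Finset.prod_eq_zero (mem_range.2 (show m+1 < j'+1 from by omega))
          (by rw [Nat.sub_self, pow_zero]; ring)]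
        ring

lemma Pq_stab {a b : ℕ} (h : a ≤ b) : (X:R)^(a+1) ∣ Pq b - Pq a := by
  obtain ⟨c, rfl⟩ := Nat.exists_eq_add_of_le h
  unfold Pq
  rw [prod_range_add]
  have heq : (∏ x ∈ range a, ((1:R) - X ^ (x+1))) * (∏ x ∈ range c, (1 - X ^ (a + x + 1)))
      - ∏ x ∈ range a, ((1:R) - X ^ (x+1))
      = (∏ x ∈ range a, ((1:R) - X ^ (x+1))) * ((∏ x ∈ range c, (1 - X ^ (a + x + 1))) - 1) := by ring
  rw [heq]
  exact Dvd.dvd.mul_left (prod_one_sub_dvd _ (fun i _ => by omega)) _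

lemma const_Pq (j : ℕ) : constantCoeff (Pq j) = 1 := by
  unfold Pq
  rw [map_prod]
  refine prod_eq_one (fun i _ => ?_)
  rw [map_sub, map_one, map_pow, constantCoeff_X]
  simp

lemma unit_cancel {D : ℕ} {f g : R} (hg : constantCoeff g ≠ 0) (h : (X:R)^D ∣ f * g) :
    (X:R)^D ∣ f := by
  have hinv := PowerSeries.mul_inv_cancel g hg
  have : f = f * g * g⁻¹ := by rw [mul_assoc, hinv, mul_one]
  rw [this]
  exact h.mul_right _

lemma gb_stab {D n j j' : ℕ} (hjD : D ≤ j) (hj2 : j + D ≤ 2*n) (hj'D : D ≤ j') (hj'2 : j' + D ≤ 2*n) :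
    (X:R)^D ∣ gb (2*n) (j:ℤ) - gb (2*n) (j':ℤ) := by
  have h1 : (X:R)^D ∣ gb (2*n) (j:ℤ) * Pq j - 1 := by
    rw [gbV]
    exact prod_one_sub_dvd _ (fun i hi => by simp only [mem_range] at hi; omega)
  have h2 : (X:R)^D ∣ gb (2*n) (j':ℤ) * Pq j' - 1 := by
    rw [gbV]
    exact prod_one_sub_dvd _ (fun i hi => by simp only [mem_range] at hi; omega)
  have h3 : (X:R)^D ∣ Pq j - Pq j' := by
    rcases le_total j j' with hle | hle
    · have h4 : (X:R)^D ∣ Pq j' - Pq j := dvd_trans (pow_dvd_pow X (by omega)) (Pq_stab hle)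
      have heq : Pq j - Pq j' = -(Pq j' - Pq j) := by ring
      rw [heq]
      exact dvd_neg.2 h4
    · exact dvd_trans (pow_dvd_pow X (by omega)) (Pq_stab hle)
  have h5 : (X:R)^D ∣ (gb (2*n) (j:ℤ) - gb (2*n) (j':ℤ)) * Pq j := by
    have heq : (gb (2*n) (j:ℤ) - gb (2*n) (j':ℤ)) * Pq j
        = (gb (2*n) (j:ℤ) * Pq j - 1) - (gb (2*n) (j':ℤ) * Pq j' - 1)
          - gb (2*n) (j':ℤ) * (Pq j - Pq j') := by ring
    rw [heq]
    exact dvd_sub (dvd_sub h1 h2) (Dvd.dvd.mul_left h3 _)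
  exact unit_cancel (by rw [const_Pq]; norm_num) h5

lemma psiP_coeff {m i : ℕ} (him : i < m) :
    (coeff i) (psiP m) = (coeff i) triangularSeries := by
  classical
  unfold psiP triangularSeries
  rw [coeff_mk, map_sum]
  simp only [coeff_X_pow]
  by_cases h : ∃ k ∈ range (i+1), k * (k+1) / 2 = i
  · rw [if_pos h]
    obtain ⟨k, hk, hTk⟩ := h
    have hTk' : T k = i := hTk
    rw [Finset.sum_eq_single k]
    · rw [if_pos hTk'.symm]
    · intro b hb hbk
      rw [if_neg]
      intro hib
      exact hbk (T_injective (hTk'.trans hib).symm ▸ rfl)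
    · intro hk2
      exact absurd (mem_range.2 (by have := T_ge k; omega)) hk2
  · rw [if_neg h]
    refine Finset.sum_eq_zero (fun b hb => ?_)
    rw [if_neg]
    intro hib
    exact h ⟨b, mem_range.2 (by have := T_ge b; omega), hib.symm⟩

lemma psiP_stab {D m : ℕ} (h : D ≤ m) : (X:R)^D ∣ psiP m - triangularSeries := by
  rw [X_pow_dvd_iff]
  intro i hi
  rw [map_sub, psiP_coeff (by omega), sub_self]
lemma S_fold (n : ℕ) : S n = (∑ i ∈ range (n+1), gb (2*n) ((n:ℤ)+(i:ℤ)) * X ^ T i)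
    + (∑ i ∈ range n, gb (2*n) ((n:ℤ)-1-(i:ℤ)) * X ^ T i) := by
  unfold S
  rw [show 2*n+1 = n + (n+1) from by ring, sum_range_add, add_comm]
  congr 1
  · refine sum_congr rfl (fun i _ => ?_)
    have hc : ((n+i:ℕ):ℤ) = (n:ℤ)+(i:ℤ) := by push_cast; ring
    rw [hc, show (n:ℤ)+(i:ℤ) - (n:ℤ) = (i:ℤ) from by ring, e_coe]
  · rw [← sum_range_reflect]
    refine sum_congr rfl (fun i hi => ?_)
    simp only [mem_range] at hi
    have hc : ((n-1-i:ℕ):ℤ) = (n:ℤ)-1-(i:ℤ) := by omega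
    rw [hc, show (n:ℤ)-1-(i:ℤ) - (n:ℤ) = -1-(i:ℤ) from by ring, e_neg]

lemma S_psi {D n : ℕ} (hD : 1 ≤ D) (hn : 2*D ≤ n) :
    (X:R)^D ∣ S n - gb (2*n) (n:ℤ) * (psiP (n+1) + psiP n) := by
  rw [S_fold]
  have key : ∀ (z : ℕ → ℤ) (m : ℕ), (∀ i, i < D → ∃ jn : ℕ, z i = (jn:ℤ) ∧ D ≤ jn ∧ jn + D ≤ 2*n) →
      (X:R)^D ∣ (∑ i ∈ range m, gb (2*n) (z i) * X ^ T i) - gb (2*n) (n:ℤ) * psiP m := by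
    intro z m hz
    unfold psiP
    rw [mul_sum, ← sum_sub_distrib]
    refine dvd_sum (fun i _ => ?_)
    have heq : gb (2*n) (z i) * X ^ T i - gb (2*n) (n:ℤ) * X ^ T i
        = (gb (2*n) (z i) - gb (2*n) (n:ℤ)) * X ^ T i := by ring
    rw [heq]
    by_cases hTi : D ≤ T i
    · exact Dvd.dvd.mul_left (pow_dvd_pow X hTi) _
    · have hiD : i < D := by have := T_ge i; omega
      obtain ⟨jn, hji, h1, h2⟩ := hz i hiD
      rw [hji]
      exact Dvd.dvd.mul_right (gb_stab h1 h2 (by omega) (by omega)) _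
  have k1 := key (fun i => (n:ℤ)+(i:ℤ)) (n+1) (fun i hiD =>
    ⟨n+i, by show (n:ℤ)+(i:ℤ) = ((n+i:ℕ):ℤ); push_cast; ring, by omega, by omega⟩)
  have k2 := key (fun i => (n:ℤ)-1-(i:ℤ)) n (fun i hiD =>
    ⟨n-1-i, by show (n:ℤ)-1-(i:ℤ) = ((n-1-i:ℕ):ℤ); omega, by omega, by omega⟩)
  have heq : (∑ i ∈ range (n+1), gb (2*n) ((n:ℤ)+(i:ℤ)) * X ^ T i)
      + (∑ i ∈ range n, gb (2*n) ((n:ℤ)-1-(i:ℤ)) * X ^ T i)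
      - gb (2*n) (n:ℤ) * (psiP (n+1) + psiP n)
      = ((∑ i ∈ range (n+1), gb (2*n) ((n:ℤ)+(i:ℤ)) * X ^ T i) - gb (2*n) (n:ℤ) * psiP (n+1))
      + ((∑ i ∈ range n, gb (2*n) ((n:ℤ)-1-(i:ℤ)) * X ^ T i) - gb (2*n) (n:ℤ) * psiP n) := by ring
  rw [heq]
  exact dvd_add k1 k2

lemma EOP (n : ℕ) : Ee n * Oo n = Pq (2*n) := by
  induction n with
  | zero => simp [Ee, Oo, Pq]
  | succ m ih =>
    unfold Ee Oo Pq at ih ⊢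
    rw [prod_range_succ, prod_range_succ,
      show 2*(m+1) = (2*m+1)+1 from by ring, prod_range_succ,
      show 2*m+1 = (2*m)+1 from rfl, prod_range_succ, ← ih]
    ring

lemma F1Pq (n : ℕ) : F1 n * Pq n = Ee n := by
  unfold F1 Pq Ee
  rw [← prod_mul_distrib]
  refine prod_congr rfl (fun i _ => ?_)
  have h1 : ((1:R) + X^(i+1)) * (1 - X^(i+1)) = 1 - X^(i+1) * X^(i+1) := by ring
  have h2 : (X:R)^(i+1) * X^(i+1) = X^(2*i+2) := by rw [← pow_add]; congr 1; omega
  rw [h1, h2]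

lemma main_cong {D n : ℕ} (hD : 1 ≤ D) (hn : 2*D ≤ n) :
    (X:R)^D ∣ triangularSeries * Oo n - Ee n := by
  obtain ⟨m, rfl⟩ : ∃ m, n = m+1 := ⟨n-1, by omega⟩
  set B := gb (2*(m+1)) ((m+1:ℕ):ℤ) with hB
  have h0 : (X:R)^D ∣ S (m+1) - B * (psiP (m+1+1) + psiP (m+1)) := S_psi hD hn
  rw [S_closed m] at h0
  have h1 : (X:R)^D ∣ 2 * (F1 m * F1 (m+1)) - B * (2 * triangularSeries) := by
    have d1 : (X:R)^D ∣ psiP (m+1+1) - triangularSeries := psiP_stab (by omega)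
    have d2 : (X:R)^D ∣ psiP (m+1) - triangularSeries := psiP_stab (by omega)
    have heq : 2 * (F1 m * F1 (m+1)) - B * (2 * triangularSeries)
        = (2 * F1 m * F1 (m+1) - B * (psiP (m+1+1) + psiP (m+1)))
          + B * ((psiP (m+1+1) - triangularSeries) + (psiP (m+1) - triangularSeries)) := by ring
    rw [heq]
    exact dvd_add h0 (Dvd.dvd.mul_left (dvd_add d1 d2) _)
  have h2 : (X:R)^D ∣ F1 m * F1 (m+1) - B * triangularSeries := by
    have hhalf : ((C : ℚ →+* R) (1/2) : R) * 2 = 1 := by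
      rw [show (2:R) = (C : ℚ →+* R) 2 from (map_ofNat (C : ℚ →+* R) 2).symm, ← map_mul]
      norm_num
    have heq : F1 m * F1 (m+1) - B * triangularSeries
        = (C : ℚ →+* R) (1/2) * (2 * (F1 m * F1 (m+1)) - B * (2 * triangularSeries)) := by
      have expand : (C : ℚ →+* R) (1/2) * (2 * (F1 m * F1 (m+1)) - B * (2 * triangularSeries))
          = ((C : ℚ →+* R) (1/2) * 2) * (F1 m * F1 (m+1)) - ((C : ℚ →+* R) (1/2) * 2) * (B * triangularSeries) := by
        ring
      rw [expand, hhalf]; ring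
    rw [heq]
    exact Dvd.dvd.mul_left h1 _
  have h3 : B * Pq (m+1) = ∏ i ∈ range (m+1), (1 - X ^ (2*(m+1) - i)) := gbV (2*(m+1)) (m+1)
  have h4 : (X:R)^D ∣ B * Pq (m+1) - 1 := by
    rw [h3]
    exact prod_one_sub_dvd _ (fun i hi => by simp only [mem_range] at hi; omega)
  have h5 : (X:R)^D ∣ F1 m * Ee (m+1) - triangularSeries := by
    have heq : F1 m * Ee (m+1) - triangularSeries
        = (F1 m * F1 (m+1) - B * triangularSeries) * Pq (m+1)
          + triangularSeries * (B * Pq (m+1) - 1)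
          + F1 m * (Ee (m+1) - F1 (m+1) * Pq (m+1)) := by ring
    rw [F1Pq (m+1), sub_self, mul_zero, add_zero] at heq
    rw [heq]
    exact dvd_add (h2.mul_right _) (Dvd.dvd.mul_left h4 _)
  have h6 : (X:R)^D ∣ F1 (m+1) * Ee (m+1) - triangularSeries := by
    have hF : F1 (m+1) = F1 m * (1 + X^(m+1)) := by unfold F1; rw [prod_range_succ]
    have heq : F1 (m+1) * Ee (m+1) - triangularSeries
        = (F1 m * Ee (m+1) - triangularSeries) + X^(m+1) * (F1 m * Ee (m+1)) := by
      rw [hF]; ring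
    rw [heq]
    exact dvd_add h5 (Dvd.dvd.mul_right (pow_dvd_pow X (by omega)) _)
  have h8 : Ee (m+1) * Oo (m+1) = Pq (2*(m+1)) := EOP (m+1)
  have h9 : Pq (2*(m+1)) = Pq (m+1) * ∏ x ∈ range (m+1), (1 - X^((m+1) + x + 1)) := by
    unfold Pq
    rw [show 2*(m+1) = (m+1) + (m+1) from by ring, prod_range_add]
  have h10 : (X:R)^D ∣ (∏ x ∈ range (m+1), ((1:R) - X^((m+1) + x + 1))) - 1 :=
    prod_one_sub_dvd _ (fun i _ => by omega)
  have h11 : F1 (m+1) * Ee (m+1) * Oo (m+1)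
      = Ee (m+1) * ∏ x ∈ range (m+1), (1 - X^((m+1) + x + 1)) := by
    calc F1 (m+1) * Ee (m+1) * Oo (m+1)
        = F1 (m+1) * (Ee (m+1) * Oo (m+1)) := by ring
      _ = F1 (m+1) * (Pq (m+1) * ∏ x ∈ range (m+1), (1 - X^((m+1) + x + 1))) := by rw [h8, h9]
      _ = (F1 (m+1) * Pq (m+1)) * ∏ x ∈ range (m+1), (1 - X^((m+1) + x + 1)) := by ring
      _ = Ee (m+1) * ∏ x ∈ range (m+1), (1 - X^((m+1) + x + 1)) := by rw [F1Pq]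
  have h12 : (X:R)^D ∣ Ee (m+1) * (∏ x ∈ range (m+1), ((1:R) - X^((m+1) + x + 1))) - Ee (m+1) := by
    have heq2 : Ee (m+1) * (∏ x ∈ range (m+1), ((1:R) - X^((m+1) + x + 1))) - Ee (m+1)
        = Ee (m+1) * ((∏ x ∈ range (m+1), ((1:R) - X^((m+1) + x + 1))) - 1) := by ring
    rw [heq2]; exact Dvd.dvd.mul_left h10 _
  have heq : triangularSeries * Oo (m+1) - Ee (m+1)
      = -((F1 (m+1) * Ee (m+1) - triangularSeries) * Oo (m+1))
        + (F1 (m+1) * Ee (m+1) * Oo (m+1) - Ee (m+1)) := by ring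
  rw [heq, h11]
  exact dvd_add (dvd_neg.2 (h6.mul_right _)) h12
lemma coeff_prod_stable (g : ℕ → ℕ) (hg : ∀ i, i+1 ≤ g i) {d a : ℕ} (hda : d < a) (c : ℕ) :
    (coeff d) (∏ i ∈ range (a+c), ((1:R) - X^(g i))) = (coeff d) (∏ i ∈ range a, ((1:R) - X^(g i))) := by
  rw [prod_range_add]
  have hdvd : (X:R)^(d+1) ∣ (∏ i ∈ range a, ((1:R) - X^(g i))) * ((∏ x ∈ range c, ((1:R) - X^(g (a+x)))) - 1) :=
    Dvd.dvd.mul_left (prod_one_sub_dvd _ (fun i _ => by have := hg (a+i); omega)) _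
  have h0 := (X_pow_dvd_iff.1 hdvd) d (by omega)
  have heq : (∏ i ∈ range a, ((1:R) - X^(g i))) * (∏ x ∈ range c, ((1:R) - X^(g (a+x))))
      = (∏ i ∈ range a, ((1:R) - X^(g i)))
        + (∏ i ∈ range a, ((1:R) - X^(g i))) * ((∏ x ∈ range c, ((1:R) - X^(g (a+x)))) - 1) := by
    ring
  rw [heq, map_add, h0, add_zero]

lemma prodInf_stab (g : ℕ → ℕ) (hg : ∀ i, i+1 ≤ g i) {D m : ℕ} (hDm : D ≤ m) :
    (X:R)^D ∣ prodInf (fun i => (1:R) - X^(g i)) - ∏ i ∈ range m, ((1:R) - X^(g i)) := by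
  rw [X_pow_dvd_iff]
  intro d hd
  rw [map_sub]
  have h1 : (coeff d) (prodInf (fun i => (1:R) - X^(g i)))
      = (coeff d) (∏ i ∈ range (d+1), ((1:R) - X^(g i))) := by
    unfold prodInf; rw [coeff_mk]
  obtain ⟨c, rfl⟩ : ∃ c, m = (d+1) + c := ⟨m - (d+1), by omega⟩
  rw [h1, coeff_prod_stable g hg (by omega) c, sub_self]

end

end GaussAux

open GaussAux in
/-- Gauss's identity: `(q²;q²)_∞ / (q;q²)_∞ = Σ_{n=0}^∞ q^{n(n+1)/2}`. -/
theorem gauss_identity :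
    prodInf (fun i => 1 - (X : PowerSeries ℚ) ^ (2 * (i + 1))) *
        (prodInf (fun i => 1 - (X : PowerSeries ℚ) ^ (2 * i + 1)))⁻¹
      = triangularSeries := by
  classical
  have hO0 : constantCoeff (prodInf (fun i => 1 - (X : PowerSeries ℚ) ^ (2 * i + 1))) ≠ 0 := by
    have h : constantCoeff (prodInf (fun i => 1 - (X : PowerSeries ℚ) ^ (2 * i + 1)))
        = coeff 0 (∏ i ∈ range (0+1), (1 - (X:R) ^ (2*i+1))) := by
      rw [← coeff_zero_eq_constantCoeff_apply]
      unfold prodInf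
      rw [coeff_mk]
    rw [h, prod_range_one]
    simp
  rw [eq_comm, PowerSeries.eq_mul_inv_iff_mul_eq hO0]
  apply PowerSeries.ext
  intro d
  set D := d+1 with hDdef
  have h1 : (X:R)^D ∣ triangularSeries * Oo (2*D) - Ee (2*D) := main_cong (by omega) (le_refl _)
  have h2 : (X:R)^D ∣ prodInf (fun i => 1 - (X:R) ^ (2 * i + 1)) - Oo (2*D) :=
    prodInf_stab (fun i => 2*i+1) (fun i => by show i+1 ≤ 2*i+1; omega) (show D ≤ 2*D by omega)
  have h3 : (X:R)^D ∣ prodInf (fun i => 1 - (X:R) ^ (2 * (i+1))) - Ee (2*D) := by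
    have hstab := prodInf_stab (fun i => 2*(i+1)) (fun i => by show i+1 ≤ 2*(i+1); omega) (show D ≤ 2*D by omega)
    have hEq : ∏ i ∈ range (2*D), ((1:R) - X^(2*(i+1))) = Ee (2*D) := by
      unfold Ee
      refine prod_congr rfl (fun i _ => ?_)
      rw [show 2*(i+1) = 2*i+2 from by ring]
    rw [hEq] at hstab
    exact hstab
  have hfinal : (X:R)^D ∣ triangularSeries * prodInf (fun i => 1 - (X:R) ^ (2 * i + 1))
      - prodInf (fun i => 1 - (X:R) ^ (2 * (i+1))) := by
    have heq : triangularSeries * prodInf (fun i => 1 - (X:R) ^ (2 * i + 1))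
        - prodInf (fun i => 1 - (X:R) ^ (2 * (i+1)))
        = (triangularSeries * Oo (2*D) - Ee (2*D))
          + triangularSeries * (prodInf (fun i => 1 - (X:R) ^ (2 * i + 1)) - Oo (2*D))
          - (prodInf (fun i => 1 - (X:R) ^ (2 * (i+1))) - Ee (2*D)) := by ring
    rw [heq]
    exact dvd_sub (dvd_add h1 (Dvd.dvd.mul_left h2 _)) h3
  have hc := X_pow_dvd_iff.1 hfinal d (by omega)
  rw [map_sub, sub_eq_zero] at hc
  exact hc
end

section
/- Let ζ be a primitive 5th root of unity. Then (ζq;q^2)_∞ (ζ^{-1}q;q^2)_∞ (q^2;q^2)_∞ = (q^{25};q^{50})_∞^2 (q^{50};q^{50})_∞ - (ζ + ζ^4) q (q^{15};q^{50})_∞ (q^{35};q^{50})_∞ (q^{50};q^{50})_∞ + (ζ^2 + ζ^3) q^4 (q^{5};q^{50})_∞ (q^{45};q^{50})_∞ (q^{50};q^{50})_∞, as formal power series in q over Q(ζ). -/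
open PowerSeries Finset

namespace JTPaux
variable (K : Type*) [Field K]

/-- `∏_{i=1}^{n} (1 - X^{e i})`. -/
noncomputable def fp (e n : ℕ) : PowerSeries K :=
  ∏ i ∈ Finset.range n, (1 - (X : PowerSeries K) ^ (e * (i + 1)))

/-- Gaussian binomial coefficient in the variable `X^e`, defined by the Pascal recursion. -/
noncomputable def gb (e : ℕ) : ℕ → ℕ → PowerSeries K
  | _, 0 => 1
  | 0, _ + 1 => 0
  | n + 1, k + 1 => gb e n k + X ^ (e * (k + 1)) * gb e n (k + 1)

variable {K}

lemma gb_zero_right (e n : ℕ) : gb K e n 0 = 1 := by cases n <;> rfl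

lemma gb_of_lt (e : ℕ) : ∀ {n k : ℕ}, n < k → gb K e n k = 0
  | 0, _ + 1, _ => rfl
  | n + 1, k + 1, h => by
    rw [gb, gb_of_lt e (by omega), gb_of_lt e (by omega)]
    simp

lemma gb_self (e : ℕ) : ∀ n, gb K e n n = 1
  | 0 => rfl
  | n + 1 => by rw [gb, gb_self e n, gb_of_lt e (by omega)]; simp

lemma gb_succ_succ (e n k : ℕ) :
    gb K e (n + 1) (k + 1) = gb K e n k + X ^ (e * (k + 1)) * gb K e n (k + 1) := rfl

private lemma hQ (e a b : ℕ) : (X : PowerSeries K) ^ (e * a) * X ^ (e * b) = X ^ (e * (a + b)) := by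
  rw [← pow_add, ← Nat.mul_add]

lemma pascal2 (e : ℕ) : ∀ n, ∀ k ≤ n,
    gb K e (n + 1) (k + 1) = X ^ (e * (n - k)) * gb K e n k + gb K e n (k + 1) := by
  intro n
  induction n with
  | zero =>
    intro k hk
    interval_cases k
    rw [gb_succ_succ, show gb K e 0 1 = 0 from gb_of_lt e (by omega)]
    simp [gb_zero_right]
  | succ m ih =>
    intro k hk
    rcases Nat.lt_or_ge k (m + 1) with hlt | hge
    · have hkm : k ≤ m := by omega
      rcases Nat.eq_zero_or_pos k with rfl | hpos
      · conv_lhs => rw [gb_succ_succ, ih 0 (by omega)]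
        conv_rhs => rw [gb_succ_succ]
        rw [gb_zero_right, gb_zero_right, Nat.sub_zero, Nat.sub_zero]
        ring
      · obtain ⟨k', rfl⟩ : ∃ k', k = k' + 1 := ⟨k - 1, by omega⟩
        have hk'm : k' ≤ m := by omega
        have hk'm1 : k' + 1 ≤ m := by omega
        obtain ⟨a, h1, h2, h3⟩ : ∃ a, m - (k' + 1) = a ∧ m - k' = a + 1 ∧ m = a + k' + 1 :=
          ⟨m - (k' + 1), rfl, by omega, by omega⟩
        conv_lhs => rw [gb_succ_succ, ih k' (by omega), ih (k' + 1) (by omega)]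
        conv_rhs => rw [gb_succ_succ, gb_succ_succ]
        rw [show m + 1 - (k' + 1) = m - k' from by omega, h1, h2, h3]
        ring

    · have hk' : k = m + 1 := by omega
      subst hk'
      rw [gb_succ_succ, gb_self, gb_of_lt e (by omega), Nat.sub_self]
      simp

lemma gb_symm (e : ℕ) : ∀ n, ∀ k ≤ n, gb K e n k = gb K e n (n - k) := by
  intro n
  induction n with
  | zero => intro k hk; interval_cases k; rfl
  | succ m ih =>
    intro k hk
    rcases Nat.eq_zero_or_pos k with rfl | hpos
    · rw [gb_zero_right, Nat.sub_zero, gb_self]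
    obtain ⟨k', rfl⟩ : ∃ k', k = k' + 1 := ⟨k - 1, by omega⟩
    rcases Nat.lt_or_ge k' m with hlt | hge
    · have h1 : m + 1 - (k' + 1) = (m - (k' + 1)) + 1 := by omega
      conv_lhs => rw [gb_succ_succ, ih k' (by omega), ih (k' + 1) (by omega)]
      conv_rhs => rw [h1, pascal2 e m (m - (k' + 1)) (by omega)]
      rw [show m - (m - (k' + 1)) = k' + 1 from by omega,
        show m - (k' + 1) + 1 = m - k' from by omega]
      ring
    · have hk' : k' = m := by omega
      subst hk'
      rw [Nat.sub_self, gb_self, gb_zero_right]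

lemma fp_zero (e : ℕ) : fp K e 0 = 1 := by simp [fp]

lemma fp_succ (e n : ℕ) : fp K e (n + 1) = fp K e n * (1 - X ^ (e * (n + 1))) := by
  rw [fp, fp, Finset.prod_range_succ]

lemma fp_mul_gb (e : ℕ) : ∀ n, ∀ k ≤ n, fp K e k * fp K e (n - k) * gb K e n k = fp K e n := by
  intro n
  induction n with
  | zero => intro k hk; interval_cases k; simp [gb_zero_right, fp_zero]
  | succ m ih =>
    intro k hk
    rcases Nat.eq_zero_or_pos k with rfl | hpos
    · simp [gb_zero_right, fp_zero]
    obtain ⟨k', rfl⟩ : ∃ k', k = k' + 1 := ⟨k - 1, by omega⟩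
    rcases Nat.lt_or_ge k' m with hlt | hge
    · obtain ⟨a, ha1, ha2⟩ : ∃ a, m - (k' + 1) = a ∧ m - k' = a + 1 :=
        ⟨m - (k' + 1), rfl, by omega⟩
      have key : fp K e (m - k') = fp K e (m - (k' + 1)) * (1 - X ^ (e * (m - k'))) := by
        rw [ha1, ha2, fp_succ]
      have h3 := ih k' (by omega)
      have h4 := ih (k' + 1) (by omega)
      rw [show m + 1 - (k' + 1) = m - k' from by omega, gb_succ_succ, fp_succ e m]
      calc fp K e (k' + 1) * fp K e (m - k')
              * (gb K e m k' + X ^ (e * (k' + 1)) * gb K e m (k' + 1))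
          = (1 - X ^ (e * (k' + 1))) * (fp K e k' * fp K e (m - k') * gb K e m k')
            + X ^ (e * (k' + 1)) * (1 - X ^ (e * (m - k')))
              * (fp K e (k' + 1) * fp K e (m - (k' + 1)) * gb K e m (k' + 1)) := by
            rw [fp_succ e k', key]; ring
        _ = (1 - X ^ (e * (k' + 1))) * fp K e m
            + X ^ (e * (k' + 1)) * (1 - X ^ (e * (m - k'))) * fp K e m := by rw [h3, h4]
        _ = fp K e m * (1 - X ^ (e * (k' + 1)) * X ^ (e * (m - k'))) := by ring
        _ = fp K e m * (1 - X ^ (e * (m + 1))) := by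
            rw [← pow_add, ← Nat.mul_add, show k' + 1 + (m - k') = m + 1 from by omega]
    · have hk' : k' = m := by omega
      subst hk'
      rw [Nat.sub_self, fp_zero, gb_self]
      ring

variable (K) in
/-- `gb` with integer column index, zero out of range. -/
noncomputable def gbz (e N : ℕ) (k : ℤ) : PowerSeries K :=
  if k < 0 then 0 else gb K e N k.toNat

lemma gbz_neg (e N : ℕ) {k : ℤ} (h : k < 0) : gbz K e N k = 0 := if_pos h

lemma gbz_coe (e N : ℕ) (k : ℕ) : gbz K e N (k : ℤ) = gb K e N k := by
  rw [gbz, if_neg (by omega), Int.toNat_natCast]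

lemma gbz_gt (e N : ℕ) {k : ℤ} (h : (N : ℤ) < k) : gbz K e N k = 0 := by
  rw [gbz, if_neg (by omega), gb_of_lt e (by omega)]

lemma pascal1z (e N : ℕ) (k : ℤ) :
    gbz K e (N + 1) k = gbz K e N (k - 1) + X ^ (e * k.toNat) * gbz K e N k := by
  rcases lt_trichotomy k 0 with h | rfl | h
  · rw [gbz_neg e _ h, gbz_neg e _ (by omega), gbz_neg e _ h]; ring
  · rw [show (0:ℤ) - 1 = -1 from rfl, gbz_neg e N (show (-1:ℤ) < 0 by norm_num)]
    simp [gbz, gb_zero_right]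
  · obtain ⟨k', rfl⟩ : ∃ k' : ℕ, k = (k' : ℤ) + 1 := ⟨(k - 1).toNat, by omega⟩
    rw [show (k' : ℤ) + 1 - 1 = (k' : ℤ) from by ring, show ((k' : ℤ) + 1) = ((k' + 1 : ℕ) : ℤ) from by push_cast; ring]
    rw [gbz_coe, gbz_coe, gbz_coe, Int.toNat_natCast, gb_succ_succ]

lemma pascal2z (e N : ℕ) (k : ℤ) :
    gbz K e (N + 1) k = X ^ (e * ((N : ℤ) + 1 - k).toNat) * gbz K e N (k - 1) + gbz K e N k := by
  rcases lt_trichotomy k 0 with h | rfl | h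
  · rw [gbz_neg e _ h, gbz_neg e _ (by omega), gbz_neg e _ h]; ring
  rotate_left
  · rcases lt_or_ge (N : ℤ) (k - 1) with hN | hN
    · rw [gbz_gt e _ (by omega), gbz_gt e _ hN, gbz_gt e _ (by omega)]; ring
    · -- 1 ≤ k ≤ N + 1
      obtain ⟨k', rfl⟩ : ∃ k' : ℕ, k = ((k' + 1 : ℕ) : ℤ) := ⟨(k - 1).toNat, by omega⟩
      have hk'N : k' ≤ N := by omega
      rw [gbz_coe, gbz_coe, show ((k' + 1 : ℕ) : ℤ) - 1 = ((k' : ℕ) : ℤ) from by push_cast; ring,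
        gbz_coe, pascal2 e N k' hk'N,
        show ((N : ℤ) + 1 - ((k' + 1 : ℕ) : ℤ)).toNat = N - k' from by omega]
  · rw [show (0:ℤ) - 1 = -1 from rfl, gbz_neg e N (show (-1:ℤ) < 0 by norm_num)]
    simp [gbz, gb_zero_right]

lemma pascal_comb (e N : ℕ) (k : ℤ) :
    gbz K e (N + 2) k = X ^ (e * ((N : ℤ) + 2 - k).toNat) * gbz K e N (k - 2)
      + (1 + X ^ (e * (N + 1))) * gbz K e N (k - 1) + X ^ (e * k.toNat) * gbz K e N k := by
  have h1 : gbz K e (N + 2) k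
      = X ^ (e * ((N : ℤ) + 2 - k).toNat) * gbz K e (N + 1) (k - 1) + gbz K e (N + 1) k := by
    have := pascal2z (K := K) e (N + 1) k
    rw [show ((N + 1 : ℕ) : ℤ) + 1 - k = (N : ℤ) + 2 - k from by push_cast; ring] at this
    exact this
  rw [h1, pascal1z e N (k - 1), pascal1z e N k, show k - 1 - 1 = k - 2 from by ring]
  have key : X ^ (e * ((N : ℤ) + 2 - k).toNat) * (X ^ (e * (k - 1).toNat) * gbz K e N (k - 1))
      = X ^ (e * (N + 1)) * gbz K e N (k - 1) := by
    by_cases hk : 1 ≤ k ∧ k ≤ (N : ℤ) + 1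
    · rw [← mul_assoc, ← pow_add, ← Nat.mul_add,
        show ((N : ℤ) + 2 - k).toNat + (k - 1).toNat = N + 1 from by omega]
    · have : gbz K e N (k - 1) = 0 := by
        rcases lt_or_ge k 1 with h | h
        · exact gbz_neg e _ (by omega)
        · exact gbz_gt e _ (by omega)
      rw [this]; ring
  linear_combination key

variable (K) in
/-- The `j`-th term of the theta series. -/
noncomputable def thetaTerm (c : K) (M D : ℕ) (j : ℤ) : PowerSeries K :=
  C ((-c) ^ j) * X ^ ((M : ℤ) * j ^ 2 + (D : ℤ) * j).toNat

lemma E_nonneg (M D : ℕ) (hD : D ≤ M) (j : ℤ) : 0 ≤ (M : ℤ) * j ^ 2 + (D : ℤ) * j := by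
  rcases le_or_gt 0 j with h | h
  · have : (0:ℤ) ≤ (M:ℤ) * j ^ 2 := by positivity
    have : (0:ℤ) ≤ (D:ℤ) * j := by positivity
    linarith
  · have h1 : j + 1 ≤ 0 := by omega
    have h2 : (0:ℤ) ≤ (M:ℤ) * (j * (j + 1)) := by
      apply mul_nonneg (by positivity)
      nlinarith
    have h3 : (M:ℤ) * j ≤ (D:ℤ) * j := by
      apply mul_le_mul_of_nonpos_right _ (le_of_lt h)
      exact_mod_cast hD
    nlinarith

lemma exp_id1 (M D : ℕ) (hD : D ≤ M) (n : ℕ) (j : ℤ) (hj : j ≤ (n : ℤ)) :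
    M + D + 2 * M * n + ((M : ℤ) * j ^ 2 + (D : ℤ) * j).toNat
      = ((M : ℤ) * (j + 1) ^ 2 + (D : ℤ) * (j + 1)).toNat + 2 * M * ((n : ℤ) - j).toNat := by
  have h1 := E_nonneg M D hD j
  have h2 := E_nonneg M D hD (j + 1)
  have h3 : (0:ℤ) ≤ (n : ℤ) - j := by omega
  zify [Int.toNat_of_nonneg h1, Int.toNat_of_nonneg h2, Int.toNat_of_nonneg h3]
  ring

lemma exp_id2 (M D : ℕ) (hD : D ≤ M) (n : ℕ) (j : ℤ) (hj : -(n : ℤ) - 1 ≤ j) :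
    M - D + 2 * M * n + ((M : ℤ) * (j + 1) ^ 2 + (D : ℤ) * (j + 1)).toNat
      = ((M : ℤ) * j ^ 2 + (D : ℤ) * j).toNat + 2 * M * ((n : ℤ) + 1 + j).toNat := by
  have h1 := E_nonneg M D hD j
  have h2 := E_nonneg M D hD (j + 1)
  have h3 : (0:ℤ) ≤ (n : ℤ) + 1 + j := by omega
  zify [hD, Int.toNat_of_nonneg h1, Int.toNat_of_nonneg h2, Int.toNat_of_nonneg h3]
  ring

lemma TT_succ_left (c : K) (hc : c ≠ 0) (M D : ℕ) (hD : D ≤ M) (n : ℕ) (j : ℤ)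
    (hj : j ≤ (n : ℤ)) :
    -(C c * X ^ (M + D + 2 * M * n)) * thetaTerm K c M D j
      = thetaTerm K c M D (j + 1) * X ^ (2 * M * ((n : ℤ) - j).toNat) := by
  have hc' : (-c) ≠ 0 := neg_ne_zero.mpr hc
  have step : ∀ (w : K) (B : ℕ),
      -(C c * X ^ (M + D + 2 * M * n)) * (C w * X ^ B)
        = C (w * (-c)) * X ^ (M + D + 2 * M * n + B) := by
    intro w B; rw [map_mul, map_neg, pow_add]; ring
  rw [thetaTerm, thetaTerm, zpow_add_one₀ hc', step, exp_id1 M D hD n j hj, pow_add]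
  ring

lemma TT_succ_right (c : K) (hc : c ≠ 0) (M D : ℕ) (hD : D ≤ M) (n : ℕ) (j : ℤ)
    (hj : -(n : ℤ) - 1 ≤ j) :
    -(C c⁻¹ * X ^ (M - D + 2 * M * n)) * thetaTerm K c M D (j + 1)
      = thetaTerm K c M D j * X ^ (2 * M * ((n : ℤ) + 1 + j).toNat) := by
  have hc' : (-c) ≠ 0 := neg_ne_zero.mpr hc
  have hcoeff : -(c⁻¹ * (-c) ^ (j + 1)) = (-c) ^ j := by
    rw [zpow_add_one₀ hc']
    field_simp
  have step : ∀ (w : K) (B : ℕ),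
      -(C c⁻¹ * X ^ (M - D + 2 * M * n)) * (C w * X ^ B)
        = C (-(c⁻¹ * w)) * X ^ (M - D + 2 * M * n + B) := by
    intro w B; rw [map_neg, map_mul, pow_add]; ring
  rw [thetaTerm, thetaTerm, step, hcoeff, exp_id2 M D hD n j hj, pow_add]
  ring

lemma sum_shift (a b : ℤ) (f : ℤ → PowerSeries K) :
    ∑ j ∈ Icc a b, f j = ∑ j ∈ Icc (a - 1) (b - 1), f (j + 1) := by
  have : Icc a b = Finset.map (addRightEmbedding 1) (Icc (a - 1) (b - 1)) := by
    rw [Finset.map_add_right_Icc]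
    congr 1 <;> ring
  rw [this, Finset.sum_map]
  rfl

lemma finJTP (c : K) (hc : c ≠ 0) (M D : ℕ) (hD : D ≤ M) (n : ℕ) :
    (∏ i ∈ range n, (1 - C c * X ^ (M + D + 2 * M * i))) *
      (∏ i ∈ range n, (1 - C c⁻¹ * X ^ (M - D + 2 * M * i)))
    = ∑ j ∈ Icc (-(n : ℤ)) (n : ℤ),
        thetaTerm K c M D j * gbz K (2 * M) (2 * n) ((n : ℤ) + j) := by
  induction n with
  | zero => norm_num [thetaTerm, gbz, gb]
  | succ n ih =>
    have hc' : (-c) ≠ 0 := neg_ne_zero.mpr hc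
    set F := thetaTerm K c M D with hF
    set G := gbz K (2 * M) (2 * n) with hG
    set aN := M + D + 2 * M * n with haN
    set bN := M - D + 2 * M * n with hbN
    set P := 2 * M * (2 * n + 1) with hP
    rw [Finset.prod_range_succ, Finset.prod_range_succ]
    have hrw : (∏ i ∈ range n, (1 - C c * X ^ (M + D + 2 * M * i)))
          * (1 - C c * X ^ (M + D + 2 * M * n)) *
        ((∏ i ∈ range n, (1 - C c⁻¹ * X ^ (M - D + 2 * M * i)))
          * (1 - C c⁻¹ * X ^ (M - D + 2 * M * n)))
        = (∏ i ∈ range n, (1 - C c * X ^ (M + D + 2 * M * i))) *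
            (∏ i ∈ range n, (1 - C c⁻¹ * X ^ (M - D + 2 * M * i)))
          * ((1 - C c * X ^ aN) * (1 - C c⁻¹ * X ^ bN)) := by ring
    rw [hrw, ih]
    have hprod : (1 - C c * X ^ aN) * (1 - C c⁻¹ * X ^ bN)
        = 1 + X ^ P - C c * X ^ aN - C c⁻¹ * X ^ bN := by
      have h1 : C c * C c⁻¹ = 1 := by rw [← map_mul, mul_inv_cancel₀ hc, map_one]
      have h2 : (X : PowerSeries K) ^ aN * X ^ bN = X ^ P := by
        rw [← pow_add]
        congr 1
        rw [hP, show 2 * M * (2 * n + 1) = 2 * M * n + 2 * M * n + 2 * M from by ring,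
          haN, hbN]
        omega
      calc (1 - C c * X ^ aN) * (1 - C c⁻¹ * X ^ bN)
          = 1 + (C c * C c⁻¹) * (X ^ aN * X ^ bN)
            - C c * X ^ aN - C c⁻¹ * X ^ bN := by ring
        _ = _ := by rw [h1, h2, one_mul]
    rw [hprod]
    -- extend the ih sum to the bigger interval
    have hext : ∑ j ∈ Icc (-(n : ℤ)) (n : ℤ), F j * G ((n : ℤ) + j)
        = ∑ j ∈ Icc (-(n : ℤ) - 1) ((n : ℤ) + 1), F j * G ((n : ℤ) + j) := by
      apply Finset.sum_subset (Finset.Icc_subset_Icc (by omega) (by omega))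
      intro x hx hnx
      simp only [Finset.mem_Icc] at hx hnx
      have : G ((n : ℤ) + x) = 0 := by
        rcases lt_or_ge ((n : ℤ) + x) 0 with h | h
        · exact gbz_neg _ _ h
        · apply gbz_gt
          push_cast
          omega
      rw [this, mul_zero]
    rw [hext]
    -- rewrite the goal's RHS range and gbz index
    have hco1 : (-(((n : ℕ) + 1 : ℕ) : ℤ)) = -(n : ℤ) - 1 := by push_cast; ring
    have hco2 : ((((n : ℕ) + 1 : ℕ)) : ℤ) = (n : ℤ) + 1 := by push_cast; ring
    rw [hco1, hco2]
    -- pointwise Pascal on the RHS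
    have pascal_pt : ∀ j ∈ Icc (-(n : ℤ) - 1) ((n : ℤ) + 1),
        F j * gbz K (2 * M) (2 * (n + 1)) ((n : ℤ) + 1 + j)
          = F j * (G ((n : ℤ) + j) * (1 + X ^ P))
            + F j * (X ^ (2 * M * ((n : ℤ) + 1 - j).toNat) * G ((n : ℤ) + j - 1))
            + F j * (X ^ (2 * M * ((n : ℤ) + 1 + j).toNat) * G ((n : ℤ) + j + 1)) := by
      intro j hj
      have hp := pascal_comb (K := K) (2 * M) (2 * n) ((n : ℤ) + 1 + j)
      rw [show ((2 * n : ℕ) : ℤ) + 2 - ((n : ℤ) + 1 + j) = (n : ℤ) + 1 - j from by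
            push_cast; ring,
          show (n : ℤ) + 1 + j - 2 = (n : ℤ) + j - 1 from by ring,
          show (n : ℤ) + 1 + j - 1 = (n : ℤ) + j from by ring] at hp
      rw [show 2 * (n + 1) = 2 * n + 2 from by ring, hp, ← hG,
        show 2 * M * (2 * n + 1) = P from rfl]
      ring
    rw [Finset.sum_congr rfl pascal_pt]
    rw [Finset.sum_add_distrib, Finset.sum_add_distrib]
    -- expand the LHS
    rw [Finset.sum_mul]
    have expand_pt : ∀ j ∈ Icc (-(n : ℤ) - 1) ((n : ℤ) + 1),
        F j * G ((n : ℤ) + j) * (1 + X ^ P - C c * X ^ aN - C c⁻¹ * X ^ bN)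
          = F j * (G ((n : ℤ) + j) * (1 + X ^ P))
            + (-(F j * G ((n : ℤ) + j) * (C c * X ^ aN))
            + -(F j * G ((n : ℤ) + j) * (C c⁻¹ * X ^ bN))) := by
      intro j hj; ring
    rw [Finset.sum_congr rfl expand_pt]
    rw [Finset.sum_add_distrib, Finset.sum_add_distrib]
    -- two matching lemmas
    have match1 : ∑ j ∈ Icc (-(n : ℤ) - 1) ((n : ℤ) + 1),
            F j * (X ^ (2 * M * ((n : ℤ) + 1 - j).toNat) * G ((n : ℤ) + j - 1))
        = ∑ j ∈ Icc (-(n : ℤ) - 1) ((n : ℤ) + 1),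
          -(F j * G ((n : ℤ) + j) * (C c * X ^ aN)) := by
      rw [sum_shift (-(n:ℤ) - 1) ((n:ℤ) + 1)
        (fun j => F j * (X ^ (2 * M * ((n : ℤ) + 1 - j).toNat) * G ((n : ℤ) + j - 1)))]
      rw [show -(n:ℤ) - 1 - 1 = -(n:ℤ) - 2 from by ring, show (n:ℤ) + 1 - 1 = (n:ℤ) from by ring]
      have h1 : ∑ j ∈ Icc (-(n : ℤ) - 2) (n : ℤ),
            F (j+1) * (X ^ (2 * M * ((n : ℤ) + 1 - (j+1)).toNat) * G ((n : ℤ) + (j+1) - 1))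
          = ∑ j ∈ Icc (-(n : ℤ) - 2) (n : ℤ),
            F (j+1) * (X ^ (2 * M * ((n : ℤ) - j).toNat) * G ((n : ℤ) + j)) := by
        apply Finset.sum_congr rfl
        intro j hj
        rw [show (n : ℤ) + 1 - (j+1) = (n:ℤ) - j from by ring,
          show (n : ℤ) + (j+1) - 1 = (n:ℤ) + j from by ring]
      rw [h1]
      -- now extend both sides to Icc (-(n+2)) (n+1) and compare pointwise
      have e1 : ∑ j ∈ Icc (-(n : ℤ) - 1) ((n : ℤ) + 1), -(F j * G ((n : ℤ) + j) * (C c * X ^ aN))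
          = ∑ j ∈ Icc (-(n : ℤ) - 2) ((n : ℤ) + 1), -(F j * G ((n : ℤ) + j) * (C c * X ^ aN)) := by
        apply Finset.sum_subset (Finset.Icc_subset_Icc (by omega) (by omega))
        intro x hx hnx
        simp only [Finset.mem_Icc] at hx hnx
        have hx2 : x = -(n:ℤ) - 2 := by omega
        have : G ((n : ℤ) + x) = 0 := gbz_neg _ _ (by omega)
        rw [this]; ring
      have e2 : ∑ j ∈ Icc (-(n : ℤ) - 2) ((n : ℤ)),
            F (j+1) * (X ^ (2 * M * ((n : ℤ) - j).toNat) * G ((n : ℤ) + j))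
          = ∑ j ∈ Icc (-(n : ℤ) - 2) ((n : ℤ) + 1),
            F (j+1) * (X ^ (2 * M * ((n : ℤ) - j).toNat) * G ((n : ℤ) + j)) := by
        apply Finset.sum_subset (Finset.Icc_subset_Icc (by omega) (by omega))
        intro x hx hnx
        simp only [Finset.mem_Icc] at hx hnx
        have hx2 : x = (n:ℤ) + 1 := by omega
        have : G ((n : ℤ) + x) = 0 := by
          apply gbz_gt; push_cast; omega
        rw [this]; simp
      rw [e1, e2]
      apply Finset.sum_congr rfl
      intro j hj
      simp only [Finset.mem_Icc] at hj
      rcases le_or_gt j (n : ℤ) with hle | hgt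
      · have key := TT_succ_left c hc M D hD n j hle
        rw [← hF] at key
        calc F (j+1) * (X ^ (2 * M * ((n : ℤ) - j).toNat) * G ((n : ℤ) + j))
            = (F (j+1) * X ^ (2 * M * ((n : ℤ) - j).toNat)) * G ((n:ℤ) + j) := by ring
          _ = (-(C c * X ^ aN) * F j) * G ((n:ℤ) + j) := by rw [key]
          _ = -(F j * G ((n : ℤ) + j) * (C c * X ^ aN)) := by ring
      · have hj2 : j = (n:ℤ) + 1 := by omega
        have : G ((n : ℤ) + j) = 0 := by apply gbz_gt; push_cast; omega
        rw [this]; ring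
    have match2 : ∑ j ∈ Icc (-(n : ℤ) - 1) ((n : ℤ) + 1),
          -(F j * G ((n : ℤ) + j) * (C c⁻¹ * X ^ bN))
        = ∑ j ∈ Icc (-(n : ℤ) - 1) ((n : ℤ) + 1),
            F j * (X ^ (2 * M * ((n : ℤ) + 1 + j).toNat) * G ((n : ℤ) + j + 1)) := by
      rw [sum_shift (-(n:ℤ) - 1) ((n:ℤ) + 1) (fun j => -(F j * G ((n : ℤ) + j) * (C c⁻¹ * X ^ bN)))]
      rw [show -(n:ℤ) - 1 - 1 = -(n:ℤ) - 2 from by ring, show (n:ℤ) + 1 - 1 = (n:ℤ) from by ring]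
      have e1 : ∑ j ∈ Icc (-(n : ℤ) - 2) ((n : ℤ)),
            -(F (j+1) * G ((n : ℤ) + (j+1)) * (C c⁻¹ * X ^ bN))
          = ∑ j ∈ Icc (-(n : ℤ) - 2) ((n : ℤ) + 1),
            -(F (j+1) * G ((n : ℤ) + (j+1)) * (C c⁻¹ * X ^ bN)) := by
        apply Finset.sum_subset (Finset.Icc_subset_Icc (by omega) (by omega))
        intro x hx hnx
        simp only [Finset.mem_Icc] at hx hnx
        have hx2 : x = (n:ℤ) + 1 := by omega
        have : G ((n : ℤ) + (x+1)) = 0 := by apply gbz_gt; push_cast; omega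
        rw [this]; ring
      have e2 : ∑ j ∈ Icc (-(n : ℤ) - 1) ((n : ℤ) + 1),
            F j * (X ^ (2 * M * ((n : ℤ) + 1 + j).toNat) * G ((n : ℤ) + j + 1))
          = ∑ j ∈ Icc (-(n : ℤ) - 2) ((n : ℤ) + 1),
            F j * (X ^ (2 * M * ((n : ℤ) + 1 + j).toNat) * G ((n : ℤ) + j + 1)) := by
        apply Finset.sum_subset (Finset.Icc_subset_Icc (by omega) (by omega))
        intro x hx hnx
        simp only [Finset.mem_Icc] at hx hnx
        have hx2 : x = -(n:ℤ) - 2 := by omega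
        have : G ((n : ℤ) + x + 1) = 0 := gbz_neg _ _ (by omega)
        rw [this]; simp
      rw [e1, e2]
      apply Finset.sum_congr rfl
      intro j hj
      simp only [Finset.mem_Icc] at hj
      rcases le_or_gt (-(n:ℤ) - 1) j with hle | hgt
      · have key := TT_succ_right c hc M D hD n j hle
        rw [← hF] at key
        calc -(F (j+1) * G ((n : ℤ) + (j+1)) * (C c⁻¹ * X ^ bN))
            = (-(C c⁻¹ * X ^ bN) * F (j+1)) * G ((n:ℤ) + j + 1) := by
              rw [show (n:ℤ) + (j+1) = (n:ℤ) + j + 1 from by ring]; ring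
          _ = (F j * X ^ (2 * M * ((n : ℤ) + 1 + j).toNat)) * G ((n:ℤ) + j + 1) := by rw [← key]
          _ = F j * (X ^ (2 * M * ((n : ℤ) + 1 + j).toNat) * G ((n : ℤ) + j + 1)) := by ring
      · have hj2 : j = -(n:ℤ) - 2 := by omega
        have : G ((n : ℤ) + j + 1) = 0 := gbz_neg _ _ (by omega)
        rw [show (n:ℤ) + (j+1) = (n:ℤ) + j + 1 from by ring, this]
        simp
    rw [match1, ← match2]
    ring

lemma coeff_eq_of_dvd {A B : PowerSeries K} {n d : ℕ}
    (h : (X : PowerSeries K) ^ n ∣ A - B) (hd : d < n) : coeff d A = coeff d B := by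
  have := (X_pow_dvd_iff.mp h) d hd
  rw [map_sub] at this
  exact sub_eq_zero.mp this

lemma prod_sub_one_dvd {ι : Type*} {s : Finset ι} {f : ι → PowerSeries K} {m : ℕ}
    (h : ∀ i ∈ s, (X : PowerSeries K) ^ m ∣ f i - 1) :
    (X : PowerSeries K) ^ m ∣ (∏ i ∈ s, f i) - 1 := by
  classical
  induction s using Finset.cons_induction with
  | empty => simp
  | cons a s ha ih =>
    rw [Finset.prod_cons]
    have h1 := h a (Finset.mem_cons_self a s)
    have h2 := ih fun i hi => h i (Finset.mem_cons_of_mem hi)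
    have key : f a * (∏ i ∈ s, f i) - 1
        = (f a - 1) * (∏ i ∈ s, f i) + ((∏ i ∈ s, f i) - 1) := by ring
    rw [key]
    exact dvd_add (h1.mul_right _) h2

lemma mul_sub_one_dvd {A B : PowerSeries K} {m : ℕ}
    (h1 : (X : PowerSeries K) ^ m ∣ A - 1) (h2 : (X : PowerSeries K) ^ m ∣ B - 1) :
    (X : PowerSeries K) ^ m ∣ A * B - 1 := by
  have key : A * B - 1 = (A - 1) * B + (B - 1) := by ring
  rw [key]
  exact dvd_add (h1.mul_right _) h2

lemma coeff_prod_stable {f : ℕ → PowerSeries K}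
    (hf : ∀ i, (X : PowerSeries K) ^ (i + 1) ∣ f i - 1) {d n : ℕ} (hd : d < n) :
    coeff d (∏ i ∈ range n, f i) = coeff d (∏ i ∈ range (d + 1), f i) := by
  have hsplit : (∏ i ∈ range (d + 1), f i) * (∏ i ∈ Ico (d + 1) n, f i)
      = ∏ i ∈ range n, f i := Finset.prod_range_mul_prod_Ico f (by omega)
  have htail : (X : PowerSeries K) ^ (d + 1) ∣ (∏ i ∈ Ico (d + 1) n, f i) - 1 := by
    apply prod_sub_one_dvd
    intro i hi
    simp only [Finset.mem_Ico] at hi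
    exact (pow_dvd_pow X (by omega)).trans (hf i)
  have : (X : PowerSeries K) ^ (d + 1) ∣
      (∏ i ∈ range n, f i) - (∏ i ∈ range (d + 1), f i) := by
    rw [← hsplit]
    have key : (∏ i ∈ range (d + 1), f i) * (∏ i ∈ Ico (d + 1) n, f i)
          - (∏ i ∈ range (d + 1), f i)
        = (∏ i ∈ range (d + 1), f i) * ((∏ i ∈ Ico (d + 1) n, f i) - 1) := by ring
    rw [key]
    exact htail.mul_left _
  exact coeff_eq_of_dvd this (by omega)

lemma prodInf_dvd {f : ℕ → PowerSeries K}
    (hf : ∀ i, (X : PowerSeries K) ^ (i + 1) ∣ f i - 1) (n : ℕ) :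
    (X : PowerSeries K) ^ n ∣ prodInf f - ∏ i ∈ range n, f i := by
  rw [X_pow_dvd_iff]
  intro m hm
  rw [map_sub, prodInf, coeff_mk, sub_eq_zero]
  rcases Nat.lt_or_ge m n with h | h
  · exact (coeff_prod_stable hf hm).symm
  · omega

lemma fp_constantCoeff (e n : ℕ) (he : 0 < e) : constantCoeff (fp K e n) = 1 := by
  rw [fp, map_prod]
  apply Finset.prod_eq_one
  intro i hi
  rw [map_sub, map_one, map_pow, constantCoeff_X, zero_pow (by positivity), sub_zero]

lemma fp_ne_zero (e n : ℕ) (he : 0 < e) : fp K e n ≠ 0 := fun h => by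
  have := fp_constantCoeff (K := K) e n he
  rw [h, map_zero] at this
  exact zero_ne_one this

lemma fp_split (e : ℕ) {a n : ℕ} (h : a ≤ n) :
    fp K e n = fp K e a * ∏ i ∈ Ico a n, (1 - (X : PowerSeries K) ^ (e * (i + 1))) := by
  rw [fp, fp, ← Finset.prod_range_mul_prod_Ico _ h]

lemma gb_fp_coeff (e n a : ℕ) (he : 0 < e) (hn : n ≤ a) (ha : a ≤ 2 * n)
    {r : ℕ} (hr : r < e * (2 * n - a) + e) :
    coeff r (gb K e (2 * n) a * fp K e n) = coeff r 1 := by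
  have hba : 2 * n - a ≤ n := by omega
  set T1 := ∏ i ∈ Ico a (2 * n), (1 - (X : PowerSeries K) ^ (e * (i + 1))) with hT1
  set T2 := ∏ i ∈ Ico (2 * n - a) n, (1 - (X : PowerSeries K) ^ (e * (i + 1))) with hT2
  have key : gb K e (2 * n) a * fp K e n = T1 * T2 := by
    have hbase : fp K e a * fp K e (2 * n - a) * gb K e (2 * n) a = fp K e (2 * n) :=
      fp_mul_gb e (2 * n) a ha
    have h1 : fp K e (2 * n) = fp K e a * T1 := fp_split e ha
    have h2 : fp K e n = fp K e (2 * n - a) * T2 := fp_split e hba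
    apply mul_left_cancel₀ (mul_ne_zero (fp_ne_zero e a he) (fp_ne_zero e (2 * n - a) he))
    calc fp K e a * fp K e (2 * n - a) * (gb K e (2 * n) a * fp K e n)
        = (fp K e a * fp K e (2 * n - a) * gb K e (2 * n) a) * fp K e n := by ring
      _ = fp K e (2 * n) * fp K e n := by rw [hbase]
      _ = (fp K e a * T1) * (fp K e (2 * n - a) * T2) := by rw [← h1, ← h2]
      _ = fp K e a * fp K e (2 * n - a) * (T1 * T2) := by ring
  rw [key]
  have hone : ∀ E : ℕ, e * (2 * n - a) + e ≤ E →
      (X : PowerSeries K) ^ (e * (2 * n - a) + e) ∣ (1 - (X : PowerSeries K) ^ E) - 1 := by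
    intro E hE
    have : (1 - (X : PowerSeries K) ^ E) - 1 = -(X ^ E) := by ring
    rw [this]
    exact dvd_neg.mpr (pow_dvd_pow X hE)
  have hd1 : (X : PowerSeries K) ^ (e * (2 * n - a) + e) ∣ T1 - 1 := by
    apply prod_sub_one_dvd
    intro i hi
    simp only [Finset.mem_Ico] at hi
    apply hone
    calc e * (2 * n - a) + e = e * (2 * n - a + 1) := by ring
      _ ≤ e * (i + 1) := Nat.mul_le_mul_left e (by omega)
  have hd2 : (X : PowerSeries K) ^ (e * (2 * n - a) + e) ∣ T2 - 1 := by
    apply prod_sub_one_dvd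
    intro i hi
    simp only [Finset.mem_Ico] at hi
    apply hone
    calc e * (2 * n - a) + e = e * (2 * n - a + 1) := by ring
      _ ≤ e * (i + 1) := Nat.mul_le_mul_left e (by omega)
  exact coeff_eq_of_dvd (mul_sub_one_dvd hd1 hd2) hr

variable (K) in
/-- The theta series `∑_{j ∈ ℤ} (-c)^j X^(M j² + D j)`. -/
noncomputable def theta (c : K) (M D : ℕ) : PowerSeries K :=
  PowerSeries.mk fun d =>
    ∑ j ∈ Icc (-(d : ℤ)) (d : ℤ),
      if (M : ℤ) * j ^ 2 + (D : ℤ) * j = (d : ℤ) then (-c) ^ j else 0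

lemma abs_le_E (M D : ℕ) (hM : 0 < M) (hD : D < M) (j : ℤ) :
    |j| ≤ (M : ℤ) * j ^ 2 + (D : ℤ) * j := by
  rcases le_or_gt 0 j with h | h
  · rw [abs_of_nonneg h]
    have h1 : (1 : ℤ) ≤ (M : ℤ) := by exact_mod_cast hM
    have h2 : (0:ℤ) ≤ (D : ℤ) * j := mul_nonneg (by positivity) h
    have h3 : (0:ℤ) ≤ j * (j - 1) := by
      rcases Int.lt_or_le j 1 with h' | h'
      · have : j = 0 := by omega
        simp [this]
      · exact mul_nonneg h (by omega)
    have h4 : (0:ℤ) ≤ ((M : ℤ) - 1) * j ^ 2 := mul_nonneg (by linarith) (sq_nonneg j)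
    have expand : (M : ℤ) * j ^ 2 + (D : ℤ) * j - j
        = ((M : ℤ) - 1) * j ^ 2 + j * (j - 1) + (D : ℤ) * j := by ring
    linarith
  · rw [abs_of_neg h]
    have h1 : (D : ℤ) + 1 ≤ (M : ℤ) := by exact_mod_cast hD
    have key : (0:ℤ) ≤ (M : ℤ) * (j * (j + 1)) := by
      apply mul_nonneg (by positivity)
      have := mul_nonneg (a := -j) (b := -(j + 1)) (by omega) (by omega)
      rwa [neg_mul_neg] at this
    have key2 : (0:ℤ) ≤ ((D : ℤ) + 1 - (M : ℤ)) * j := by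
      have := mul_nonneg (a := -((D : ℤ) + 1 - (M : ℤ))) (b := -j) (by linarith) (by omega)
      rwa [neg_mul_neg] at this
    have expand : (M : ℤ) * j ^ 2 + (D : ℤ) * j + j
        = (M : ℤ) * (j * (j + 1)) + ((D : ℤ) + 1 - (M : ℤ)) * j := by ring
    linarith

lemma JTP (c : K) (hc : c ≠ 0) (M D : ℕ) (hM : 0 < M) (hD : D < M) :
    prodInf (fun i => 1 - C c * X ^ (M + D + 2 * M * i)) *
        prodInf (fun i => 1 - C c⁻¹ * X ^ (M - D + 2 * M * i)) *
        prodInf (fun i => 1 - (X : PowerSeries K) ^ (2 * M * (i + 1)))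
      = theta K c M D := by
  ext d
  set n := d + 1 with hn
  have hfA : ∀ i : ℕ, (X : PowerSeries K) ^ (i + 1) ∣ (1 - C c * X ^ (M + D + 2 * M * i)) - 1 := by
    intro i
    have h2 : 2 * i ≤ 2 * M * i := Nat.mul_le_mul_right i (by omega)
    have key : (1 - C c * X ^ (M + D + 2 * M * i)) - 1
        = -C c * X ^ (M + D + 2 * M * i) := by ring
    rw [key]
    exact (pow_dvd_pow X (by omega)).mul_left _
  have hfB : ∀ i : ℕ, (X : PowerSeries K) ^ (i + 1) ∣ (1 - C c⁻¹ * X ^ (M - D + 2 * M * i)) - 1 := by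
    intro i
    have h2 : 2 * i ≤ 2 * M * i := Nat.mul_le_mul_right i (by omega)
    have key : (1 - C c⁻¹ * X ^ (M - D + 2 * M * i)) - 1
        = -C c⁻¹ * X ^ (M - D + 2 * M * i) := by ring
    rw [key]
    exact (pow_dvd_pow X (by omega)).mul_left _
  have hfE : ∀ i : ℕ, (X : PowerSeries K) ^ (i + 1) ∣ (1 - (X : PowerSeries K) ^ (2 * M * (i + 1))) - 1 := by
    intro i
    have h2 : 1 * (i + 1) ≤ 2 * M * (i + 1) := Nat.mul_le_mul_right (i + 1) (by omega)
    have key : (1 - (X : PowerSeries K) ^ (2 * M * (i + 1))) - 1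
        = -(X ^ (2 * M * (i + 1))) := by ring
    rw [key]
    exact dvd_neg.mpr (pow_dvd_pow X (by omega))
  set An := ∏ i ∈ range n, (1 - C c * X ^ (M + D + 2 * M * i)) with hAn
  set Bn := ∏ i ∈ range n, (1 - C c⁻¹ * X ^ (M - D + 2 * M * i)) with hBn
  set En := ∏ i ∈ range n, (1 - (X : PowerSeries K) ^ (2 * M * (i + 1))) with hEn
  have hdvd : (X : PowerSeries K) ^ n ∣
      prodInf (fun i => 1 - C c * X ^ (M + D + 2 * M * i)) *
        prodInf (fun i => 1 - C c⁻¹ * X ^ (M - D + 2 * M * i)) *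
        prodInf (fun i => 1 - (X : PowerSeries K) ^ (2 * M * (i + 1))) - An * Bn * En := by
    have d1 := prodInf_dvd hfA n
    have d2 := prodInf_dvd hfB n
    have d3 := prodInf_dvd hfE n
    have key : prodInf (fun i => 1 - C c * X ^ (M + D + 2 * M * i)) *
        prodInf (fun i => 1 - C c⁻¹ * X ^ (M - D + 2 * M * i)) *
        prodInf (fun i => 1 - (X : PowerSeries K) ^ (2 * M * (i + 1))) - An * Bn * En
      = (prodInf (fun i => 1 - C c * X ^ (M + D + 2 * M * i)) - An) *
          prodInf (fun i => 1 - C c⁻¹ * X ^ (M - D + 2 * M * i)) *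
          prodInf (fun i => 1 - (X : PowerSeries K) ^ (2 * M * (i + 1)))
        + An * (prodInf (fun i => 1 - C c⁻¹ * X ^ (M - D + 2 * M * i)) - Bn) *
            prodInf (fun i => 1 - (X : PowerSeries K) ^ (2 * M * (i + 1)))
        + An * Bn * (prodInf (fun i => 1 - (X : PowerSeries K) ^ (2 * M * (i + 1))) - En) := by
      ring
    rw [key]
    exact dvd_add (dvd_add ((d1.mul_right _).mul_right _) ((d2.mul_left _).mul_right _))
      (d3.mul_left _)
  rw [coeff_eq_of_dvd hdvd (by omega)]
  have hAB : An * Bn = ∑ j ∈ Icc (-(n : ℤ)) (n : ℤ),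
      thetaTerm K c M D j * gbz K (2 * M) (2 * n) ((n : ℤ) + j) := finJTP c hc M D hD.le n
  have hABE : An * Bn * En = ∑ j ∈ Icc (-(n : ℤ)) (n : ℤ),
      C ((-c) ^ j) * (X ^ ((M : ℤ) * j ^ 2 + (D : ℤ) * j).toNat *
        (gbz K (2 * M) (2 * n) ((n : ℤ) + j) * fp K (2 * M) n)) := by
    rw [hAB, Finset.sum_mul]
    apply Finset.sum_congr rfl
    intro j hj
    rw [thetaTerm, hEn, fp]
    ring
  rw [hABE, map_sum]
  have claim : ∀ j ∈ Icc (-(n : ℤ)) (n : ℤ),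
      coeff d (C ((-c) ^ j) * (X ^ ((M : ℤ) * j ^ 2 + (D : ℤ) * j).toNat *
          (gbz K (2 * M) (2 * n) ((n : ℤ) + j) * fp K (2 * M) n)))
        = if (M : ℤ) * j ^ 2 + (D : ℤ) * j = (d : ℤ) then (-c) ^ j else 0 := by
    intro j hj
    simp only [Finset.mem_Icc] at hj
    rw [coeff_C_mul]
    set E := (M : ℤ) * j ^ 2 + (D : ℤ) * j with hE
    have hE0 : 0 ≤ E := E_nonneg M D hD.le j
    have habs : |j| ≤ E := abs_le_E M D hM hD j
    set s := j.natAbs with hs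
    have hsE : (s : ℤ) ≤ E := by rw [hs, ← Int.abs_eq_natAbs]; exact habs
    have hj1 : (0:ℤ) ≤ (n : ℤ) + j := by omega
    set m := ((n : ℤ) + j).toNat with hm
    have harg : ((n : ℤ) + j) = ((m : ℕ) : ℤ) := by omega
    have hgbz : gbz K (2 * M) (2 * n) ((n : ℤ) + j) = gb K (2 * M) (2 * n) m := by
      rw [harg, gbz_coe]
    set a := if n ≤ m then m else 2 * n - m with ha
    have hna : n ≤ a := by rw [ha]; split <;> omega
    have ha2 : a ≤ 2 * n := by rw [ha]; split <;> omega
    have hsub : 2 * n - a = n - s := by rw [ha]; split <;> omega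
    have hgb_eq : gb K (2 * M) (2 * n) m = gb K (2 * M) (2 * n) a := by
      rw [ha]
      split
      · rfl
      · exact gb_symm (2 * M) (2 * n) m (by omega)
    by_cases hEd : E ≤ (d : ℤ)
    · have hEd' : E.toNat ≤ d := by omega
      obtain ⟨r, hr⟩ : ∃ r, d = r + E.toNat := ⟨d - E.toNat, by omega⟩
      have hbound : r < 2 * M * (2 * n - a) + 2 * M := by
        rw [hsub]
        have hM2 : 2 * (n - s) ≤ 2 * M * (n - s) := Nat.mul_le_mul_right (n - s) (by omega)
        omega
      rw [hr, coeff_X_pow_mul, hgbz, hgb_eq,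
        gb_fp_coeff (2 * M) n a (by omega) hna ha2 hbound, coeff_one]
      split_ifs with h1 h2 h3
      · ring
      · exfalso
        apply h2
        rw [h1, Nat.zero_add]
        exact (Int.toNat_of_nonneg hE0).symm
      · exfalso
        apply h1
        have h4 : E = (E.toNat : ℤ) := (Int.toNat_of_nonneg hE0).symm
        rw [h4] at h3
        have h5 : E.toNat = r + E.toNat := by exact_mod_cast h3
        omega
      · ring
    · have h0 : coeff d (X ^ E.toNat *
          (gbz K (2 * M) (2 * n) ((n : ℤ) + j) * fp K (2 * M) n)) = 0 :=
        X_pow_dvd_iff.mp (dvd_mul_right _ _) d (by omega)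
      rw [h0, if_neg (by omega), mul_zero]
  rw [Finset.sum_congr rfl claim, theta, coeff_mk]
  apply (Finset.sum_subset (Finset.Icc_subset_Icc (by omega) (by omega)) _).symm
  intro x hx hnx
  simp only [Finset.mem_Icc] at hx hnx
  apply if_neg
  have habs := abs_le_E M D hM hD x
  rw [Int.abs_eq_natAbs] at habs
  omega

lemma coeff_X_pow_mul' (t d : ℕ) (φ : PowerSeries K) :
    coeff d (X ^ t * φ) = if t ≤ d then coeff (d - t) φ else 0 := by
  split
  · rename_i h
    obtain ⟨r, rfl⟩ : ∃ r, d = r + t := ⟨d - t, by omega⟩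
    rw [coeff_X_pow_mul, show r + t - t = r from by omega]
  · rename_i h
    exact X_pow_dvd_iff.mp (dvd_mul_right _ _) d (by omega)

lemma sum_ite_eq_solset {S T : Finset ℤ} {P : ℤ → Prop} [DecidablePred P] {v : ℤ → K}
    (hTS : T ⊆ S) (hP : ∀ j ∈ S, P j ↔ j ∈ T) :
    (∑ j ∈ S, if P j then v j else 0) = ∑ j ∈ T, v j := by
  rw [← Finset.sum_subset hTS (fun x hx hnx => if_neg (fun hPx => hnx ((hP x hx).mp hPx)))]
  apply Finset.sum_congr rfl
  intro x hx
  rw [if_pos ((hP x (hTS hx)).mpr hx)]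

lemma sum_ite_zero {S : Finset ℤ} {P : ℤ → Prop} [DecidablePred P] {v : ℤ → K}
    (hP : ∀ j ∈ S, ¬ P j) :
    (∑ j ∈ S, if P j then v j else 0) = 0 :=
  Finset.sum_eq_zero fun j hj => if_neg (hP j hj)

lemma nonsq {d : ℕ} (h : ¬ d.sqrt * d.sqrt = d) (x : ℤ) : x ^ 2 ≠ (d : ℤ) := by
  intro hx
  apply h
  have h1 : ((x.natAbs * x.natAbs : ℕ) : ℤ) = (d : ℤ) := by
    push_cast
    rw [abs_mul_abs_self]
    linear_combination hx
  have h2 : x.natAbs * x.natAbs = d := by exact_mod_cast h1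
  rw [← h2, Nat.sqrt_eq]

lemma theta_dissection (ζ : K) (hζ5 : ζ ^ 5 = 1) :
    theta K ζ 1 0 = theta K 1 25 0 - C (ζ + ζ ^ 4) * X * theta K 1 25 10
      + C (ζ ^ 2 + ζ ^ 3) * X ^ 4 * theta K 1 25 20 := by
  -- power manipulation helpers
  have hz : ∀ a b : ℕ, ζ ^ (5 * a + b) = ζ ^ b := by
    intro a b; rw [pow_add, pow_mul, hζ5, one_pow, one_mul]
  have hneg : ∀ a b : ℕ, (-1 : K) ^ (5 * a + b) = (-1) ^ a * (-1) ^ b := by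
    intro a b
    rw [pow_add, pow_mul]
    norm_num
  have hsplit : ∀ a b : ℕ, (-ζ) ^ (5 * a + b) = (-1 : K) ^ a * ((-1) ^ b * ζ ^ b) := by
    intro a b
    have h1 : (-ζ) = (-1 : K) * ζ := by ring
    rw [h1, mul_pow, hz, hneg]
    ring
  have hinv1 : ∀ a : ℕ, ((-1 : K) ^ a)⁻¹ = (-1) ^ a := by
    intro a
    rw [← inv_pow, inv_neg, inv_one]
  have hzinv : ∀ b : ℕ, b ≤ 5 → (ζ ^ b)⁻¹ = ζ ^ (5 - b) := by
    intro b hb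
    apply inv_eq_of_mul_eq_one_left
    rw [← pow_add, show 5 - b + b = 5 from by omega, hζ5]
  ext d
  rw [map_add, map_sub, mul_assoc (C (ζ + ζ ^ 4)), mul_assoc (C (ζ ^ 2 + ζ ^ 3)),
    coeff_C_mul, coeff_C_mul,
    show (X : PowerSeries K) * theta K 1 25 10 = X ^ 1 * theta K 1 25 10 from by rw [pow_one],
    coeff_X_pow_mul', coeff_X_pow_mul']
  rw [theta, theta, theta, theta, coeff_mk, coeff_mk]
  simp only [coeff_mk]
  simp only [Nat.cast_one, Nat.cast_zero, Nat.cast_ofNat, one_mul, zero_mul, add_zero]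
  by_cases hsq : d.sqrt * d.sqrt = d
  case neg =>
    have hL : (∑ x ∈ Finset.Icc (-(d:ℤ)) (d:ℤ), if x ^ 2 = (d:ℤ) then (-ζ) ^ x else 0) = 0 := by
      apply sum_ite_zero
      intro j hj hc
      exact nonsq hsq j hc
    have h1 : (∑ x ∈ Finset.Icc (-(d:ℤ)) (d:ℤ), if 25 * x ^ 2 = (d:ℤ) then (-1:K) ^ x else 0)
        = 0 := by
      apply sum_ite_zero
      intro j hj hc
      exact nonsq hsq (5*j) (by linear_combination hc)
    rw [hL, h1]
    split_ifs with hA hB hB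
    · have h2 : (∑ x ∈ Finset.Icc (-((d-1:ℕ):ℤ)) ((d-1:ℕ):ℤ),
          if 25*x^2+10*x = ((d-1:ℕ):ℤ) then (-1:K)^x else 0) = 0 := by
        apply sum_ite_zero
        intro j hj hc
        have hcast : ((d-1:ℕ):ℤ) = (d:ℤ) - 1 := by omega
        rw [hcast] at hc
        exact nonsq hsq (5*j+1) (by linear_combination hc)
      have h3 : (∑ x ∈ Finset.Icc (-((d-4:ℕ):ℤ)) ((d-4:ℕ):ℤ),
          if 25*x^2+20*x = ((d-4:ℕ):ℤ) then (-1:K)^x else 0) = 0 := by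
        apply sum_ite_zero
        intro j hj hc
        have hcast : ((d-4:ℕ):ℤ) = (d:ℤ) - 4 := by omega
        rw [hcast] at hc
        exact nonsq hsq (5*j+2) (by linear_combination hc)
      rw [h2, h3]; ring
    · have h2 : (∑ x ∈ Finset.Icc (-((d-1:ℕ):ℤ)) ((d-1:ℕ):ℤ),
          if 25*x^2+10*x = ((d-1:ℕ):ℤ) then (-1:K)^x else 0) = 0 := by
        apply sum_ite_zero
        intro j hj hc
        have hcast : ((d-1:ℕ):ℤ) = (d:ℤ) - 1 := by omega
        rw [hcast] at hc
        exact nonsq hsq (5*j+1) (by linear_combination hc)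
      rw [h2]; ring
    · have h3 : (∑ x ∈ Finset.Icc (-((d-4:ℕ):ℤ)) ((d-4:ℕ):ℤ),
          if 25*x^2+20*x = ((d-4:ℕ):ℤ) then (-1:K)^x else 0) = 0 := by
        apply sum_ite_zero
        intro j hj hc
        have hcast : ((d-4:ℕ):ℤ) = (d:ℤ) - 4 := by omega
        rw [hcast] at hc
        exact nonsq hsq (5*j+2) (by linear_combination hc)
      rw [h3]; ring
    · ring
  case pos =>
    have hs : d.sqrt * d.sqrt = d := hsq
    set s := d.sqrt with hsdef
    rcases Nat.eq_zero_or_pos s with hs0 | hs0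
    · have hd0 : d = 0 := by rw [← hs, hs0]
      subst hd0
      norm_num
    · have hd1 : 1 ≤ d := by
        have := Nat.mul_le_mul hs0 hs0
        omega
      have hsd : s ≤ d := by
        have := Nat.le_mul_of_pos_left s hs0
        omega
      set m := s / 5 with hm
      set r := s % 5 with hr
      have hsm : 5 * m + r = s := Nat.div_add_mod s 5
      have hr5 : r < 5 := Nat.mod_lt _ (by norm_num)
      have hsz : ((s:ℤ))^2 = (d:ℤ) := by
        have h' : ((s * s : ℕ) : ℤ) = ((d : ℕ) : ℤ) := by exact_mod_cast hs
        push_cast at h'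
        linear_combination h'
      have hLval : (∑ x ∈ Finset.Icc (-(d:ℤ)) (d:ℤ), if x ^ 2 = (d:ℤ) then (-ζ) ^ x else 0)
          = (-ζ) ^ ((s:ℤ)) + (-ζ) ^ (-(s:ℤ)) := by
        rw [sum_ite_eq_solset (T := {((s:ℕ):ℤ), -((s:ℕ):ℤ)}) ?_ ?_, Finset.sum_pair (by omega)]
        · intro x hx
          simp only [Finset.mem_insert, Finset.mem_singleton] at hx
          simp only [Finset.mem_Icc]
          omega
        · intro j hj
          simp only [Finset.mem_insert, Finset.mem_singleton]
          constructor
          · intro hc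
            have hfac : (j - (s:ℤ)) * (j + (s:ℤ)) = 0 := by linear_combination hc - hsz
            rcases mul_eq_zero.mp hfac with h | h
            · left; omega
            · right; omega
          · rintro (rfl | rfl)
            · exact hsz
            · linear_combination hsz
      rw [hLval]
      -- helper: emptiness of T1 unless r = 0
      have hT1empty : r ≠ 0 →
          (∑ x ∈ Finset.Icc (-(d:ℤ)) (d:ℤ), if 25 * x ^ 2 = (d:ℤ) then (-1:K) ^ x else 0)
            = 0 := by
        intro hrne
        apply sum_ite_zero
        intro j hj hc
        have hfac : (5*j - (s:ℤ)) * (5*j + (s:ℤ)) = 0 := by linear_combination hc - hsz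
        rcases mul_eq_zero.mp hfac with h | h <;> omega
      have hT2empty : r ≠ 1 → r ≠ 4 →
          (if 1 ≤ d then ∑ x ∈ Finset.Icc (-((d-1:ℕ):ℤ)) ((d-1:ℕ):ℤ),
            if 25*x^2+10*x = ((d-1:ℕ):ℤ) then (-1:K)^x else 0 else 0) = 0 := by
        intro h1 h4
        rw [if_pos hd1]
        apply sum_ite_zero
        intro j hj hc
        have hcast : ((d-1:ℕ):ℤ) = (d:ℤ) - 1 := by omega
        rw [hcast] at hc
        have hfac : (5*j + 1 - (s:ℤ)) * (5*j + 1 + (s:ℤ)) = 0 := by linear_combination hc - hsz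
        rcases mul_eq_zero.mp hfac with h | h <;> omega
      have hT3empty : r ≠ 2 → r ≠ 3 →
          (if 4 ≤ d then ∑ x ∈ Finset.Icc (-((d-4:ℕ):ℤ)) ((d-4:ℕ):ℤ),
            if 25*x^2+20*x = ((d-4:ℕ):ℤ) then (-1:K)^x else 0 else 0) = 0 := by
        intro h2 h3
        split_ifs with h4d
        · apply sum_ite_zero
          intro j hj hc
          have hcast : ((d-4:ℕ):ℤ) = (d:ℤ) - 4 := by omega
          rw [hcast] at hc
          have hfac : (5*j + 2 - (s:ℤ)) * (5*j + 2 + (s:ℤ)) = 0 := by linear_combination hc - hsz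
          rcases mul_eq_zero.mp hfac with h | h <;> omega
        · rfl
      have hrc : r = 0 ∨ r = 1 ∨ r = 2 ∨ r = 3 ∨ r = 4 := by omega
      rcases hrc with hrv | hrv | hrv | hrv | hrv
      · -- r = 0 : s = 5m, m ≥ 1
        have hm1 : 1 ≤ m := by omega
        have hT1 : (∑ x ∈ Finset.Icc (-(d:ℤ)) (d:ℤ), if 25 * x ^ 2 = (d:ℤ) then (-1:K) ^ x else 0)
            = (-1:K) ^ ((m:ℕ):ℤ) + (-1:K) ^ (-((m:ℕ):ℤ)) := by
          rw [sum_ite_eq_solset (T := {((m:ℕ):ℤ), -((m:ℕ):ℤ)}) ?_ ?_, Finset.sum_pair (by omega)]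
          · intro x hx
            simp only [Finset.mem_insert, Finset.mem_singleton] at hx
            simp only [Finset.mem_Icc]
            omega
          · intro j hj
            simp only [Finset.mem_insert, Finset.mem_singleton]
            constructor
            · intro hc
              have hfac : (5*j - (s:ℤ)) * (5*j + (s:ℤ)) = 0 := by linear_combination hc - hsz
              rcases mul_eq_zero.mp hfac with h | h <;> omega
            · rintro (rfl | rfl)
              · have h5 : (5 * (m:ℤ)) = (s:ℤ) := by omega
                linear_combination (5*(m:ℤ) + (s:ℤ)) * h5 + hsz
              · have h5 : (5 * (m:ℤ)) = (s:ℤ) := by omega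
                linear_combination (5*(m:ℤ) + (s:ℤ)) * h5 + hsz
        rw [hT1, hT2empty (by omega) (by omega), hT3empty (by omega) (by omega)]
        simp only [zpow_neg, zpow_natCast]
        rw [show s = 5*m+0 from by omega, hsplit]
        simp only [pow_zero, mul_one, one_mul, hinv1]
        ring
      · -- r = 1
        have hT2 : (if 1 ≤ d then ∑ x ∈ Finset.Icc (-((d-1:ℕ):ℤ)) ((d-1:ℕ):ℤ),
            if 25*x^2+10*x = ((d-1:ℕ):ℤ) then (-1:K)^x else 0 else 0) = (-1:K)^((m:ℕ):ℤ) := by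
          rw [if_pos hd1]
          rw [sum_ite_eq_solset (T := {((m:ℕ):ℤ)}) ?_ ?_, Finset.sum_singleton]
          · intro x hx
            simp only [Finset.mem_singleton] at hx
            simp only [Finset.mem_Icc]
            omega
          · intro j hj
            have hcast : ((d-1:ℕ):ℤ) = (d:ℤ) - 1 := by omega
            simp only [Finset.mem_singleton]
            constructor
            · intro hc
              rw [hcast] at hc
              have hfac : (5*j + 1 - (s:ℤ)) * (5*j + 1 + (s:ℤ)) = 0 := by
                linear_combination hc - hsz
              rcases mul_eq_zero.mp hfac with h | h <;> omega
            · rintro rfl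
              rw [hcast]
              have h5 : 5 * (m:ℤ) + 1 = (s:ℤ) := by omega
              linear_combination (5*(m:ℤ) + 1 + (s:ℤ)) * h5 + hsz
        rw [hT1empty (by omega), hT2, hT3empty (by omega) (by omega)]
        simp only [zpow_neg, zpow_natCast]
        rw [show s = 5*m+1 from by omega, hsplit]
        simp only [mul_inv, hinv1]
        rw [hzinv 1 (by norm_num)]
        norm_num
        ring
      · -- r = 2
        have h4d : 4 ≤ d := by
          have := Nat.mul_le_mul (show 2 ≤ s from by omega) (show 2 ≤ s from by omega)
          omega
        have hT3 : (if 4 ≤ d then ∑ x ∈ Finset.Icc (-((d-4:ℕ):ℤ)) ((d-4:ℕ):ℤ),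
            if 25*x^2+20*x = ((d-4:ℕ):ℤ) then (-1:K)^x else 0 else 0) = (-1:K)^((m:ℕ):ℤ) := by
          rw [if_pos h4d]
          rw [sum_ite_eq_solset (T := {((m:ℕ):ℤ)}) ?_ ?_, Finset.sum_singleton]
          · intro x hx
            simp only [Finset.mem_singleton] at hx
            simp only [Finset.mem_Icc]
            omega
          · intro j hj
            have hcast : ((d-4:ℕ):ℤ) = (d:ℤ) - 4 := by omega
            simp only [Finset.mem_singleton]
            constructor
            · intro hc
              rw [hcast] at hc
              have hfac : (5*j + 2 - (s:ℤ)) * (5*j + 2 + (s:ℤ)) = 0 := by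
                linear_combination hc - hsz
              rcases mul_eq_zero.mp hfac with h | h <;> omega
            · rintro rfl
              rw [hcast]
              have h5 : 5 * (m:ℤ) + 2 = (s:ℤ) := by omega
              linear_combination (5*(m:ℤ) + 2 + (s:ℤ)) * h5 + hsz
        rw [hT1empty (by omega), hT2empty (by omega) (by omega), hT3]
        simp only [zpow_neg, zpow_natCast]
        rw [show s = 5*m+2 from by omega, hsplit]
        simp only [mul_inv, hinv1]
        rw [hzinv 2 (by norm_num)]
        norm_num
        ring
      · -- r = 3
        have h4d : 4 ≤ d := by
          have := Nat.mul_le_mul (show 3 ≤ s from by omega) (show 3 ≤ s from by omega)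
          omega
        have hd9 : 9 ≤ d := by
          have := Nat.mul_le_mul (show 3 ≤ s from by omega) (show 3 ≤ s from by omega)
          omega
        have hT3 : (if 4 ≤ d then ∑ x ∈ Finset.Icc (-((d-4:ℕ):ℤ)) ((d-4:ℕ):ℤ),
            if 25*x^2+20*x = ((d-4:ℕ):ℤ) then (-1:K)^x else 0 else 0)
            = (-1:K)^(-((m:ℕ):ℤ)-1) := by
          rw [if_pos h4d]
          rw [sum_ite_eq_solset (T := {-((m:ℕ):ℤ)-1}) ?_ ?_, Finset.sum_singleton]
          · intro x hx
            simp only [Finset.mem_singleton] at hx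
            simp only [Finset.mem_Icc]
            omega
          · intro j hj
            have hcast : ((d-4:ℕ):ℤ) = (d:ℤ) - 4 := by omega
            simp only [Finset.mem_singleton]
            constructor
            · intro hc
              rw [hcast] at hc
              have hfac : (5*j + 2 - (s:ℤ)) * (5*j + 2 + (s:ℤ)) = 0 := by
                linear_combination hc - hsz
              rcases mul_eq_zero.mp hfac with h | h <;> omega
            · rintro rfl
              rw [hcast]
              have h5 : 5 * (m:ℤ) + 3 = (s:ℤ) := by omega
              linear_combination (5*(m:ℤ) + 3 + (s:ℤ)) * h5 + hsz
        rw [hT1empty (by omega), hT2empty (by omega) (by omega), hT3]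
        rw [show -((m:ℕ):ℤ)-1 = -(((m+1:ℕ):ℕ):ℤ) from by push_cast; ring]
        simp only [zpow_neg, zpow_natCast]
        rw [show s = 5*m+3 from by omega, hsplit]
        simp only [mul_inv, hinv1]
        rw [hzinv 3 (by norm_num)]
        norm_num
        ring
      · -- r = 4
        have hT2 : (if 1 ≤ d then ∑ x ∈ Finset.Icc (-((d-1:ℕ):ℤ)) ((d-1:ℕ):ℤ),
            if 25*x^2+10*x = ((d-1:ℕ):ℤ) then (-1:K)^x else 0 else 0)
            = (-1:K)^(-((m:ℕ):ℤ)-1) := by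
          rw [if_pos hd1]
          rw [sum_ite_eq_solset (T := {-((m:ℕ):ℤ)-1}) ?_ ?_, Finset.sum_singleton]
          · intro x hx
            simp only [Finset.mem_singleton] at hx
            simp only [Finset.mem_Icc]
            omega
          · intro j hj
            have hcast : ((d-1:ℕ):ℤ) = (d:ℤ) - 1 := by omega
            simp only [Finset.mem_singleton]
            constructor
            · intro hc
              rw [hcast] at hc
              have hfac : (5*j + 1 - (s:ℤ)) * (5*j + 1 + (s:ℤ)) = 0 := by
                linear_combination hc - hsz
              rcases mul_eq_zero.mp hfac with h | h <;> omega
            · rintro rfl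
              rw [hcast]
              have h5 : 5 * (m:ℤ) + 4 = (s:ℤ) := by omega
              linear_combination (5*(m:ℤ) + 4 + (s:ℤ)) * h5 + hsz
        rw [hT1empty (by omega), hT2, hT3empty (by omega) (by omega)]
        rw [show -((m:ℕ):ℤ)-1 = -(((m+1:ℕ):ℕ):ℤ) from by push_cast; ring]
        simp only [zpow_neg, zpow_natCast]
        rw [show s = 5*m+4 from by omega, hsplit]
        simp only [mul_inv, hinv1]
        rw [hzinv 4 (by norm_num)]
        norm_num
        ring


end JTPaux

/-- 5-dissection of `(ζq;q²)_∞ (ζ⁻¹q;q²)_∞ (q²;q²)_∞` for `ζ` a primitive 5th root of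
unity. -/
theorem fifth_root_jacobi_dissection {K : Type*} [Field K] [CharZero K] (ζ : K)
    (hζ : IsPrimitiveRoot ζ 5) :
    prodInf (fun i => 1 - PowerSeries.C ζ * X ^ (2 * i + 1)) *
        prodInf (fun i => 1 - PowerSeries.C ζ⁻¹ * X ^ (2 * i + 1)) *
        prodInf (fun i => 1 - (X : PowerSeries K) ^ (2 * (i + 1)))
      = prodInf (fun i => 1 - (X : PowerSeries K) ^ (25 + 50 * i)) ^ 2 *
            prodInf (fun i => 1 - (X : PowerSeries K) ^ (50 * (i + 1)))
        - PowerSeries.C (ζ + ζ ^ 4) * X *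
            (prodInf (fun i => 1 - (X : PowerSeries K) ^ (15 + 50 * i)) *
              prodInf (fun i => 1 - (X : PowerSeries K) ^ (35 + 50 * i)) *
              prodInf (fun i => 1 - (X : PowerSeries K) ^ (50 * (i + 1))))
        + PowerSeries.C (ζ ^ 2 + ζ ^ 3) * X ^ 4 *
            (prodInf (fun i => 1 - (X : PowerSeries K) ^ (5 + 50 * i)) *
              prodInf (fun i => 1 - (X : PowerSeries K) ^ (45 + 50 * i)) *
              prodInf (fun i => 1 - (X : PowerSeries K) ^ (50 * (i + 1)))) := by
  have hζ0 : ζ ≠ 0 := hζ.ne_zero (by norm_num)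
  have hζ5 : ζ ^ 5 = 1 := hζ.pow_eq_one
  have h1 := JTPaux.JTP ζ hζ0 1 0 (by norm_num) (by norm_num)
  have h2 := JTPaux.JTP (1 : K) one_ne_zero 25 0 (by norm_num) (by norm_num)
  have h3 := JTPaux.JTP (1 : K) one_ne_zero 25 10 (by norm_num) (by norm_num)
  have h4 := JTPaux.JTP (1 : K) one_ne_zero 25 20 (by norm_num) (by norm_num)
  rw [show (fun i => 1 - PowerSeries.C ζ * X ^ (1 + 0 + 2 * 1 * i))
      = (fun i => 1 - PowerSeries.C ζ * X ^ (2 * i + 1)) from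
      funext fun i => by rw [show 1 + 0 + 2 * 1 * i = 2 * i + 1 from by ring],
    show (fun i => 1 - PowerSeries.C ζ⁻¹ * X ^ (1 - 0 + 2 * 1 * i))
      = (fun i => 1 - PowerSeries.C ζ⁻¹ * X ^ (2 * i + 1)) from
      funext fun i => by rw [show 1 - 0 + 2 * 1 * i = 2 * i + 1 from by ring],
    show (fun i => 1 - (X : PowerSeries K) ^ (2 * 1 * (i + 1)))
      = (fun i => 1 - (X : PowerSeries K) ^ (2 * (i + 1))) from
      funext fun i => by rw [show 2 * 1 * (i + 1) = 2 * (i + 1) from by ring]] at h1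
  rw [show (fun i => 1 - PowerSeries.C (1 : K) * X ^ (25 + 0 + 2 * 25 * i))
      = (fun i => 1 - (X : PowerSeries K) ^ (25 + 50 * i)) from
      funext fun i => by
        rw [map_one, one_mul, show 25 + 0 + 2 * 25 * i = 25 + 50 * i from by ring],
    show (fun i => 1 - PowerSeries.C ((1 : K))⁻¹ * X ^ (25 - 0 + 2 * 25 * i))
      = (fun i => 1 - (X : PowerSeries K) ^ (25 + 50 * i)) from
      funext fun i => by
        rw [inv_one, map_one, one_mul, show 25 - 0 + 2 * 25 * i = 25 + 50 * i from by ring],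
    show (fun i => 1 - (X : PowerSeries K) ^ (2 * 25 * (i + 1)))
      = (fun i => 1 - (X : PowerSeries K) ^ (50 * (i + 1))) from
      funext fun i => by rw [show 2 * 25 * (i + 1) = 50 * (i + 1) from by ring]] at h2
  rw [show (fun i => 1 - PowerSeries.C (1 : K) * X ^ (25 + 10 + 2 * 25 * i))
      = (fun i => 1 - (X : PowerSeries K) ^ (35 + 50 * i)) from
      funext fun i => by
        rw [map_one, one_mul, show 25 + 10 + 2 * 25 * i = 35 + 50 * i from by ring],
    show (fun i => 1 - PowerSeries.C ((1 : K))⁻¹ * X ^ (25 - 10 + 2 * 25 * i))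
      = (fun i => 1 - (X : PowerSeries K) ^ (15 + 50 * i)) from
      funext fun i => by
        rw [inv_one, map_one, one_mul, show 25 - 10 + 2 * 25 * i = 15 + 50 * i from by norm_num],
    show (fun i => 1 - (X : PowerSeries K) ^ (2 * 25 * (i + 1)))
      = (fun i => 1 - (X : PowerSeries K) ^ (50 * (i + 1))) from
      funext fun i => by rw [show 2 * 25 * (i + 1) = 50 * (i + 1) from by ring]] at h3
  rw [show (fun i => 1 - PowerSeries.C (1 : K) * X ^ (25 + 20 + 2 * 25 * i))
      = (fun i => 1 - (X : PowerSeries K) ^ (45 + 50 * i)) from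
      funext fun i => by
        rw [map_one, one_mul, show 25 + 20 + 2 * 25 * i = 45 + 50 * i from by ring],
    show (fun i => 1 - PowerSeries.C ((1 : K))⁻¹ * X ^ (25 - 20 + 2 * 25 * i))
      = (fun i => 1 - (X : PowerSeries K) ^ (5 + 50 * i)) from
      funext fun i => by
        rw [inv_one, map_one, one_mul, show 25 - 20 + 2 * 25 * i = 5 + 50 * i from by norm_num],
    show (fun i => 1 - (X : PowerSeries K) ^ (2 * 25 * (i + 1)))
      = (fun i => 1 - (X : PowerSeries K) ^ (50 * (i + 1))) from
      funext fun i => by rw [show 2 * 25 * (i + 1) = 50 * (i + 1) from by ring]] at h4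
  rw [h1, JTPaux.theta_dissection ζ hζ5, ← h2, ← h3, ← h4]
  ring
end

section
/- Double-sum rearrangement for S_{L7}: the two formal power series in z and q given by Σ_{n=0}^∞ Σ_{j=1}^∞ (1-z^j)(1-z^{j-1}) z^{1-j} (-1)^{j+1} (1+q^{2j-1}) q^{j(j-1) + n(n-1)/2 + 2jn} and Σ_{j=0}^∞ Σ_{n=-j}^{j} (1-z^{j-|n|+1})(1-z^{j-|n|}) z^{|n|-j} (-1)^{j+n} q^{j(j+1) - n(n-1)/2} are equal. -/
open PowerSeries Finset LaurentPolynomial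

/-- The double sum
`Σ_{n=0}^∞ Σ_{j=1}^∞ (1-z^j)(1-z^{j-1}) z^{1-j} (-1)^{j+1} (1+q^{2j-1}) q^{j(j-1)+n(n-1)/2+2jn}`
as a formal power series in `q` with Laurent-polynomial coefficients in `z`. -/
noncomputable def sL7DoubleSum : PowerSeries (LaurentPolynomial ℚ) :=
  PowerSeries.mk fun d =>
    ∑ j ∈ Finset.Icc 1 (d + 1), ∑ n ∈ Finset.range (d + 2),
      ((if j * (j - 1) + n * (n - 1) / 2 + 2 * j * n = d then
          (1 - T (j : ℤ)) * (1 - T ((j : ℤ) - 1)) * T (1 - (j : ℤ)) *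
            LaurentPolynomial.C ((-1 : ℚ) ^ (j + 1)) else 0) +
        (if j * (j - 1) + n * (n - 1) / 2 + 2 * j * n + (2 * j - 1) = d then
          (1 - T (j : ℤ)) * (1 - T ((j : ℤ) - 1)) * T (1 - (j : ℤ)) *
            LaurentPolynomial.C ((-1 : ℚ) ^ (j + 1)) else 0))

/-- The Hecke–Rogers style double sum
`Σ_{j=0}^∞ Σ_{n=-j}^{j} (1-z^{j-|n|+1})(1-z^{j-|n|}) z^{|n|-j} (-1)^{j+n} q^{j(j+1)-n(n-1)/2}`
as a formal power series in `q` with Laurent-polynomial coefficients in `z`. -/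
noncomputable def sL7HeckeSum : PowerSeries (LaurentPolynomial ℚ) :=
  PowerSeries.mk fun d =>
    ∑ j ∈ Finset.range (d + 1), ∑ n ∈ Finset.Icc (-(j : ℤ)) (j : ℤ),
      if (j : ℤ) * ((j : ℤ) + 1) - n * (n - 1) / 2 = (d : ℤ) then
        (1 - T ((j : ℤ) - |n| + 1)) * (1 - T ((j : ℤ) - |n|)) * T (|n| - (j : ℤ)) *
          LaurentPolynomial.C ((-1 : ℚ) ^ ((j : ℤ) + n))
      else 0

/- ### Auxiliary definitions and lemmas -/

/-- The common Laurent-polynomial weight on the left-hand side. -/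
noncomputable def sL7A (j : ℕ) : LaurentPolynomial ℚ :=
  (1 - T (j : ℤ)) * (1 - T ((j : ℤ) - 1)) * T (1 - (j : ℤ)) *
    LaurentPolynomial.C ((-1 : ℚ) ^ (j + 1))

/-- The Laurent-polynomial weight on the right-hand side. -/
noncomputable def sL7G (J : ℕ) (N : ℤ) : LaurentPolynomial ℚ :=
  (1 - T ((J : ℤ) - |N| + 1)) * (1 - T ((J : ℤ) - |N|)) * T (|N| - (J : ℤ)) *
    LaurentPolynomial.C ((-1 : ℚ) ^ ((J : ℤ) + N))

lemma sL7_nat_half (n : ℕ) : 2 * (n * (n - 1) / 2) = n * (n - 1) := by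
  have h : Even (n * (n - 1)) := by
    rcases Nat.even_or_odd n with h | h
    · exact h.mul_right _
    · exact (Nat.Odd.sub_odd h odd_one).mul_left _
  obtain ⟨k, hk⟩ := h
  omega

lemma sL7_cast_mul_pred (n : ℕ) : ((n * (n - 1) : ℕ) : ℤ) = (n : ℤ) * ((n : ℤ) - 1) := by
  cases n with
  | zero => simp
  | succ m => push_cast [Nat.succ_sub_one]; ring

lemma sL7_cast_half (n : ℕ) : ((n * (n - 1) / 2 : ℕ) : ℤ) * 2 = (n : ℤ) * ((n : ℤ) - 1) := by
  have h : n * (n - 1) / 2 * 2 = n * (n - 1) := by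
    have h2 := sL7_nat_half n
    generalize n * (n - 1) = m at *
    omega
  calc ((n * (n - 1) / 2 : ℕ) : ℤ) * 2 = ((n * (n - 1) / 2 * 2 : ℕ) : ℤ) := by push_cast; ring
    _ = ((n * (n - 1) : ℕ) : ℤ) := by rw [h]
    _ = (n : ℤ) * ((n : ℤ) - 1) := sL7_cast_mul_pred n

lemma sL7_sign (a : ℤ) (b : ℕ) (h : a % 2 = (b : ℤ) % 2) : (-1 : ℚ) ^ a = (-1 : ℚ) ^ b := by
  rcases Int.even_or_odd a with ha | ha
  · rw [ha.neg_one_zpow, Even.neg_one_pow]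
    rw [Int.even_iff] at ha
    rw [Nat.even_iff]; omega
  · rw [ha.neg_one_zpow, Odd.neg_one_pow]
    rw [Int.odd_iff] at ha
    rw [Nat.odd_iff]; omega

/-- The bijection for the `n ≥ 0` half. -/
lemma sL7_pos_bij (d : ℕ) :
    ∑ x ∈ ((Finset.Icc 1 (d + 1) ×ˢ Finset.range (d + 2)).filter
        (fun p => p.1 * (p.1 - 1) + p.2 * (p.2 - 1) / 2 + 2 * p.1 * p.2 = d)), sL7A x.1 =
    ∑ x ∈ ((((Finset.range (d + 1)).sigma fun J => Finset.Icc (-(J : ℤ)) (J : ℤ)).filter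
          (fun x => (x.1 : ℤ) * ((x.1 : ℤ) + 1) - x.2 * (x.2 - 1) / 2 = (d : ℤ))).filter
        (fun x => 0 ≤ x.2)), sL7G x.1 x.2 := by
  refine Finset.sum_bij' (fun p _ => ⟨p.1 + p.2 - 1, (p.2 : ℤ)⟩)
    (fun x _ => (x.1 - x.2.toNat + 1, x.2.toNat)) ?_ ?_ ?_ ?_ ?_
  · rintro ⟨j, n⟩ hp
    simp only [Finset.mem_filter, Finset.mem_product, Finset.mem_Icc, Finset.mem_range,
      Finset.mem_sigma] at hp ⊢
    obtain ⟨⟨⟨hj1, hj2⟩, hn⟩, hc⟩ := hp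
    obtain ⟨k, rfl⟩ : ∃ k, j = k + 1 := ⟨j - 1, by omega⟩
    simp only [Nat.add_sub_cancel] at hc
    have e0 : k + 1 + n - 1 = k + n := by omega
    rw [e0]
    set t := n * (n - 1) / 2 with htd
    have htZ : (t : ℤ) * 2 = (n : ℤ) * ((n : ℤ) - 1) := by rw [htd]; exact sL7_cast_half n
    have hcZ : ((k : ℤ) + 1) * (k : ℤ) + (t : ℤ) + 2 * ((k : ℤ) + 1) * (n : ℤ) = (d : ℤ) := by
      exact_mod_cast hc
    have hdiv : (n : ℤ) * ((n : ℤ) - 1) / 2 = (t : ℤ) := by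
      rw [← htZ]; exact Int.mul_ediv_cancel _ (by norm_num)
    have hb : k + n ≤ d := by
      have h1 : k ≤ (k + 1) * k := by nlinarith
      have h2 : n ≤ 2 * (k + 1) * n := by nlinarith
      omega
    refine ⟨⟨⟨by omega, by omega, by omega⟩, ?_⟩, by omega⟩
    push_cast
    rw [hdiv]
    linear_combination hcZ - htZ
  · rintro ⟨J, N⟩ hx
    simp only [Finset.mem_filter, Finset.mem_product, Finset.mem_Icc, Finset.mem_range,
      Finset.mem_sigma] at hx ⊢
    obtain ⟨⟨⟨hJ, hN1, hN2⟩, hc⟩, hpos⟩ := hx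
    obtain ⟨n, rfl⟩ : ∃ n : ℕ, ((n : ℤ) : ℤ) = N := ⟨N.toNat, Int.toNat_of_nonneg hpos⟩
    simp only [Int.toNat_natCast]
    have hnJ : n ≤ J := by exact_mod_cast hN2
    set t := n * (n - 1) / 2 with htd
    have htZ : (t : ℤ) * 2 = (n : ℤ) * ((n : ℤ) - 1) := by rw [htd]; exact sL7_cast_half n
    have hdiv : (n : ℤ) * ((n : ℤ) - 1) / 2 = (t : ℤ) := by
      rw [← htZ]; exact Int.mul_ediv_cancel _ (by norm_num)
    rw [hdiv] at hc
    refine ⟨⟨⟨by omega, by omega⟩, by omega⟩, ?_⟩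
    obtain ⟨k, hk⟩ : ∃ k, J - n = k := ⟨J - n, rfl⟩
    rw [hk]
    simp only [Nat.add_sub_cancel]
    have hkZ : (k : ℤ) = (J : ℤ) - (n : ℤ) := by omega
    have hZ : ((k : ℤ) + 1) * (k : ℤ) + (t : ℤ) + 2 * ((k : ℤ) + 1) * (n : ℤ) = (d : ℤ) := by
      rw [hkZ]
      linear_combination hc + htZ
    exact_mod_cast hZ
  · rintro ⟨j, n⟩ hp
    simp only [Finset.mem_filter, Finset.mem_product, Finset.mem_Icc] at hp
    have hj1 : 1 ≤ j := hp.1.1.1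
    simp only [Int.toNat_natCast, Prod.mk.injEq]
    exact ⟨by omega, trivial⟩
  · rintro ⟨J, N⟩ hx
    simp only [Finset.mem_filter, Finset.mem_Icc, Finset.mem_range, Finset.mem_sigma] at hx
    obtain ⟨⟨⟨hJ, hN1, hN2⟩, hc⟩, hpos⟩ := hx
    have h1 : J - N.toNat + 1 + N.toNat - 1 = J := by omega
    have h2 : ((N.toNat : ℤ)) = N := by omega
    dsimp only
    rw [h1, h2]
  · rintro ⟨j, n⟩ hp
    simp only [Finset.mem_filter, Finset.mem_product, Finset.mem_Icc] at hp
    have hj1 : 1 ≤ j := hp.1.1.1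
    unfold sL7A sL7G
    have habs : |(n : ℤ)| = (n : ℤ) := Int.abs_natCast n
    have hcast : ((j + n - 1 : ℕ) : ℤ) = (j : ℤ) + n - 1 := by omega
    rw [habs, hcast]
    have e1 : (j : ℤ) + n - 1 - n + 1 = (j : ℤ) := by ring
    have e2 : (j : ℤ) + n - 1 - n = (j : ℤ) - 1 := by ring
    have e3 : (n : ℤ) - ((j : ℤ) + n - 1) = 1 - (j : ℤ) := by ring
    rw [e1, e2, e3]
    congr 1
    exact congrArg _ (sL7_sign ((j : ℤ) + n - 1 + n) (j + 1) (by omega)).symm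

/-- The bijection for the `n < 0` half. -/
lemma sL7_neg_bij (d : ℕ) :
    ∑ x ∈ ((Finset.Icc 1 (d + 1) ×ˢ Finset.range (d + 2)).filter
        (fun p => p.1 * (p.1 - 1) + p.2 * (p.2 - 1) / 2 + 2 * p.1 * p.2 + (2 * p.1 - 1) = d)),
      sL7A x.1 =
    ∑ x ∈ ((((Finset.range (d + 1)).sigma fun J => Finset.Icc (-(J : ℤ)) (J : ℤ)).filter
          (fun x => (x.1 : ℤ) * ((x.1 : ℤ) + 1) - x.2 * (x.2 - 1) / 2 = (d : ℤ))).filter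
        (fun x => ¬ 0 ≤ x.2)), sL7G x.1 x.2 := by
  refine Finset.sum_bij' (fun p _ => ⟨p.1 + p.2, -(p.2 : ℤ) - 1⟩)
    (fun x _ => (x.1 - (-x.2 - 1).toNat, (-x.2 - 1).toNat)) ?_ ?_ ?_ ?_ ?_
  · rintro ⟨j, n⟩ hp
    simp only [Finset.mem_filter, Finset.mem_product, Finset.mem_Icc, Finset.mem_range,
      Finset.mem_sigma] at hp ⊢
    obtain ⟨⟨⟨hj1, hj2⟩, hn⟩, hc⟩ := hp
    obtain ⟨k, rfl⟩ : ∃ k, j = k + 1 := ⟨j - 1, by omega⟩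
    simp only [Nat.add_sub_cancel] at hc
    have e : 2 * (k + 1) - 1 = 2 * k + 1 := by omega
    rw [e] at hc
    set t := n * (n - 1) / 2 with htd
    have htZ : (t : ℤ) * 2 = (n : ℤ) * ((n : ℤ) - 1) := by rw [htd]; exact sL7_cast_half n
    have hcZ : ((k : ℤ) + 1) * (k : ℤ) + (t : ℤ) + 2 * ((k : ℤ) + 1) * (n : ℤ)
        + (2 * (k : ℤ) + 1) = (d : ℤ) := by exact_mod_cast hc
    have h2 : (-(n : ℤ) - 1) * ((-(n : ℤ) - 1) - 1) = 2 * ((t : ℤ) + 2 * n + 1) := by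
      linear_combination -htZ
    have hdivneg : (-(n : ℤ) - 1) * ((-(n : ℤ) - 1) - 1) / 2 = (t : ℤ) + 2 * n + 1 := by
      rw [h2]; exact Int.mul_ediv_cancel_left _ (by norm_num)
    have hb : k + 1 + n ≤ d := by
      have h1 : k ≤ (k + 1) * k := by nlinarith
      have h3 : n ≤ 2 * (k + 1) * n := by nlinarith
      omega
    refine ⟨⟨⟨by omega, by omega, by omega⟩, ?_⟩, by omega⟩
    push_cast
    rw [hdivneg]
    linear_combination hcZ - htZ
  · rintro ⟨J, N⟩ hx
    simp only [Finset.mem_filter, Finset.mem_product, Finset.mem_Icc, Finset.mem_range,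
      Finset.mem_sigma] at hx ⊢
    obtain ⟨⟨⟨hJ, hN1, hN2⟩, hc⟩, hneg⟩ := hx
    push_neg at hneg
    obtain ⟨m, rfl⟩ : ∃ m : ℕ, N = -(m : ℤ) - 1 := ⟨(-N - 1).toNat, by omega⟩
    have hmt : (-(-(m : ℤ) - 1) - 1).toNat = m := by omega
    rw [hmt]
    have hmJ : m + 1 ≤ J := by omega
    set t := m * (m - 1) / 2 with htd
    have htZ : (t : ℤ) * 2 = (m : ℤ) * ((m : ℤ) - 1) := by rw [htd]; exact sL7_cast_half m
    have h2 : (-(m : ℤ) - 1) * ((-(m : ℤ) - 1) - 1) = 2 * ((t : ℤ) + 2 * m + 1) := by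
      linear_combination -htZ
    have hdivneg : (-(m : ℤ) - 1) * ((-(m : ℤ) - 1) - 1) / 2 = (t : ℤ) + 2 * m + 1 := by
      rw [h2]; exact Int.mul_ediv_cancel_left _ (by norm_num)
    rw [hdivneg] at hc
    refine ⟨⟨⟨by omega, by omega⟩, by omega⟩, ?_⟩
    obtain ⟨k, hk⟩ : ∃ k, J - m = k + 1 := ⟨J - m - 1, by omega⟩
    rw [hk]
    simp only [Nat.add_sub_cancel]
    have e : 2 * (k + 1) - 1 = 2 * k + 1 := by omega
    rw [e]
    have hkZ : (k : ℤ) = (J : ℤ) - (m : ℤ) - 1 := by omega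
    have hZ : ((k : ℤ) + 1) * (k : ℤ) + (t : ℤ) + 2 * ((k : ℤ) + 1) * (m : ℤ)
        + (2 * (k : ℤ) + 1) = (d : ℤ) := by
      rw [hkZ]
      linear_combination hc + htZ
    exact_mod_cast hZ
  · rintro ⟨j, n⟩ hp
    simp only [Finset.mem_filter, Finset.mem_product, Finset.mem_Icc] at hp
    have hj1 : 1 ≤ j := hp.1.1.1
    have hmt : (-(-(n : ℤ) - 1) - 1).toNat = n := by omega
    simp only [hmt, Prod.mk.injEq]
    exact ⟨by omega, trivial⟩
  · rintro ⟨J, N⟩ hx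
    simp only [Finset.mem_filter, Finset.mem_Icc, Finset.mem_range, Finset.mem_sigma] at hx
    obtain ⟨⟨⟨hJ, hN1, hN2⟩, hc⟩, hneg⟩ := hx
    push_neg at hneg
    have h1 : J - (-N - 1).toNat + (-N - 1).toNat = J := by omega
    have h2 : -(((-N - 1).toNat : ℤ)) - 1 = N := by omega
    dsimp only
    rw [h1, h2]
  · rintro ⟨j, n⟩ hp
    simp only [Finset.mem_filter, Finset.mem_product, Finset.mem_Icc] at hp
    have hj1 : 1 ≤ j := hp.1.1.1
    unfold sL7A sL7G
    have habs : |(-(n : ℤ) - 1)| = (n : ℤ) + 1 := by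
      rw [abs_of_nonpos (by omega)]; ring
    rw [habs]
    have hcast : ((j + n : ℕ) : ℤ) = (j : ℤ) + n := by push_cast; ring
    rw [hcast]
    have e1 : (j : ℤ) + n - ((n : ℤ) + 1) + 1 = (j : ℤ) := by ring
    have e2 : (j : ℤ) + n - ((n : ℤ) + 1) = (j : ℤ) - 1 := by ring
    have e3 : (n : ℤ) + 1 - ((j : ℤ) + n) = 1 - (j : ℤ) := by ring
    rw [e1, e2, e3]
    congr 1
    exact congrArg _ (sL7_sign ((j : ℤ) + n + (-(n : ℤ) - 1)) (j + 1) (by omega)).symm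

/-- Double-sum rearrangement for `S_{L7}`: the two double series are equal as formal power
series in `q` with Laurent-polynomial coefficients in `z`. -/
theorem sL7_double_sum_rearrangement : sL7DoubleSum = sL7HeckeSum := by
  refine PowerSeries.ext fun d => ?_
  calc (PowerSeries.coeff d) sL7DoubleSum
      = ∑ j ∈ Finset.Icc 1 (d + 1), ∑ n ∈ Finset.range (d + 2),
          ((if j * (j - 1) + n * (n - 1) / 2 + 2 * j * n = d then sL7A j else 0) +
           (if j * (j - 1) + n * (n - 1) / 2 + 2 * j * n + (2 * j - 1) = d then sL7A j
            else 0)) := by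
        simp only [sL7DoubleSum, coeff_mk]; rfl
    _ = ∑ x ∈ Finset.Icc 1 (d + 1) ×ˢ Finset.range (d + 2),
          ((if x.1 * (x.1 - 1) + x.2 * (x.2 - 1) / 2 + 2 * x.1 * x.2 = d then sL7A x.1 else 0) +
           (if x.1 * (x.1 - 1) + x.2 * (x.2 - 1) / 2 + 2 * x.1 * x.2 + (2 * x.1 - 1) = d then
              sL7A x.1 else 0)) :=
        (Finset.sum_product' _ _ _).symm
    _ = (∑ x ∈ Finset.Icc 1 (d + 1) ×ˢ Finset.range (d + 2),
          if x.1 * (x.1 - 1) + x.2 * (x.2 - 1) / 2 + 2 * x.1 * x.2 = d then sL7A x.1 else 0) +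
        (∑ x ∈ Finset.Icc 1 (d + 1) ×ˢ Finset.range (d + 2),
          if x.1 * (x.1 - 1) + x.2 * (x.2 - 1) / 2 + 2 * x.1 * x.2 + (2 * x.1 - 1) = d then
            sL7A x.1 else 0) := Finset.sum_add_distrib
    _ = (∑ x ∈ ((Finset.Icc 1 (d + 1) ×ˢ Finset.range (d + 2)).filter
            (fun p => p.1 * (p.1 - 1) + p.2 * (p.2 - 1) / 2 + 2 * p.1 * p.2 = d)), sL7A x.1) +
        (∑ x ∈ ((Finset.Icc 1 (d + 1) ×ˢ Finset.range (d + 2)).filter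
            (fun p => p.1 * (p.1 - 1) + p.2 * (p.2 - 1) / 2 + 2 * p.1 * p.2 + (2 * p.1 - 1) = d)),
          sL7A x.1) := by rw [Finset.sum_filter, Finset.sum_filter]
    _ = (∑ x ∈ ((((Finset.range (d + 1)).sigma fun J => Finset.Icc (-(J : ℤ)) (J : ℤ)).filter
            (fun x => (x.1 : ℤ) * ((x.1 : ℤ) + 1) - x.2 * (x.2 - 1) / 2 = (d : ℤ))).filter
            (fun x => 0 ≤ x.2)), sL7G x.1 x.2) +
        (∑ x ∈ ((((Finset.range (d + 1)).sigma fun J => Finset.Icc (-(J : ℤ)) (J : ℤ)).filter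
            (fun x => (x.1 : ℤ) * ((x.1 : ℤ) + 1) - x.2 * (x.2 - 1) / 2 = (d : ℤ))).filter
            (fun x => ¬ 0 ≤ x.2)), sL7G x.1 x.2) := by
        rw [sL7_pos_bij d, sL7_neg_bij d]
    _ = ∑ x ∈ (((Finset.range (d + 1)).sigma fun J => Finset.Icc (-(J : ℤ)) (J : ℤ)).filter
            (fun x => (x.1 : ℤ) * ((x.1 : ℤ) + 1) - x.2 * (x.2 - 1) / 2 = (d : ℤ))),
          sL7G x.1 x.2 := Finset.sum_filter_add_sum_filter_not _ _ _
    _ = ∑ x ∈ ((Finset.range (d + 1)).sigma fun J => Finset.Icc (-(J : ℤ)) (J : ℤ)),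
          if (x.1 : ℤ) * ((x.1 : ℤ) + 1) - x.2 * (x.2 - 1) / 2 = (d : ℤ) then sL7G x.1 x.2
          else 0 := Finset.sum_filter _ _
    _ = ∑ J ∈ Finset.range (d + 1), ∑ N ∈ Finset.Icc (-(J : ℤ)) (J : ℤ),
          if (J : ℤ) * ((J : ℤ) + 1) - N * (N - 1) / 2 = (d : ℤ) then sL7G J N else 0 :=
        (Finset.sum_sigma' (Finset.range (d + 1)) (fun J => Finset.Icc (-(J : ℤ)) (J : ℤ))
          (fun J N => if (J : ℤ) * ((J : ℤ) + 1) - N * (N - 1) / 2 = (d : ℤ) then sL7G J N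
            else 0)).symm
    _ = (PowerSeries.coeff d) sL7HeckeSum := by
        simp only [sL7HeckeSum, coeff_mk]; rfl
end
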